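/- arXiv:1307.2718 — 10 statements merged into one kernel-verified Lean document; each statement's English description precedes it below -/
import Mathlib

section
/- Let q be a power of a prime p and let d ≥ 2 be an integer. If p does not divide d and gcd(q−1, d−1) = 1, then N_d(q) ≤ q^{d−1}. -/
/-- The relation on polynomials of degree exactly `d` over `F`:
`f ~ g` iff the functional graphs of the induced maps are isomorphic, i.e.
there is a bijection `σ` with `σ ∘ f = g ∘ σ`. -/
def polyFunRel (F : Type*) [Field F] (d : ℕ)
    (f g : {f : Polynomial F // f.natDegree = d}) : Prop :=
  ∃ σ : F ≃ F,
    ⇑σ ∘ (fun x => Polynomial.eval x f.1) = (fun x => Polynomial.eval x g.1) ∘ ⇑σ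

/-- `N_d(q)`: the number of isomorphism classes of functional graphs of maps
`x ↦ f(x)` as `f` ranges over polynomials of degree exactly `d` over `F`. -/
noncomputable def numFunctionalGraphs (F : Type*) [Field F] (d : ℕ) : ℕ :=
  Nat.card (Quot (polyFunRel F d))

open Polynomial in
private lemma aux_coeff_comp {F : Type*} [Field F] (g : F[X]) {d : ℕ} (hd : 2 ≤ d)
    (hdeg : g.natDegree = d) (hm : g.Monic) (e : F) :
    (g.comp (X + C e)).coeff (d - 1) = g.coeff (d - 1) + (d : F) * e := by
  obtain ⟨m, rfl⟩ : ∃ m, d = m + 1 := ⟨d - 1, by omega⟩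
  have h1 : g.comp (X + C e)
      = ∑ i ∈ Finset.range (m + 1 + 1), C (g.coeff i) * (X + C e) ^ i := by
    rw [comp, eval₂_eq_sum_range, hdeg]
  rw [h1, finset_sum_coeff]
  simp only [coeff_C_mul, coeff_X_add_C_pow, Nat.add_sub_cancel]
  rw [Finset.sum_range_succ, Finset.sum_range_succ]
  have hz : ∑ i ∈ Finset.range m, g.coeff i * (e ^ (i - m) * (i.choose m : F)) = 0 := by
    apply Finset.sum_eq_zero
    intro i hi
    rw [Nat.choose_eq_zero_of_lt (Finset.mem_range.mp hi)]
    simp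
  have hlead : g.coeff (m + 1) = 1 := by
    have := hm.coeff_natDegree
    rwa [hdeg] at this
  rw [hz, hlead]
  simp [Nat.choose_succ_self_right]
  ring

private lemma flip_conj {F : Type*} (σ : F ≃ F) (f g : F → F) (h : ⇑σ ∘ f = g ∘ ⇑σ) :
    ⇑σ.symm ∘ g = f ∘ ⇑σ.symm := by
  funext x
  have h2 := congrFun h (σ.symm x)
  simp only [Function.comp_apply] at h2 ⊢
  rw [Equiv.apply_symm_apply] at h2
  rw [← h2, Equiv.symm_apply_apply]

open Polynomial in
theorem stmt3 (p : ℕ) (hp : p.Prime) (F : Type*) [Field F] [Fintype F] [CharP F p]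
    (q : ℕ) (hq : q = Fintype.card F) (d : ℕ) (hd : 2 ≤ d)
    (hpd : ¬ p ∣ d) (hgcd : Nat.gcd (q - 1) (d - 1) = 1) :
    numFunctionalGraphs F d ≤ q ^ (d - 1) := by
  classical
  subst hq
  have hdF : (d : F) ≠ 0 := by
    rw [Ne, CharP.cast_eq_zero_iff F p]
    exact hpd
  haveI : Finite (degreeLT F (d - 1)) :=
    Finite.of_equiv _ (degreeLTEquiv F (d - 1)).toEquiv.symm
  -- degree fact for normal forms
  have hdeg : ∀ r : degreeLT F (d - 1), ((X : F[X]) ^ d + r.1).natDegree = d := by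
    intro r
    have h1 : (r.1 : F[X]).degree < ((X : F[X]) ^ d).degree := by
      rw [degree_X_pow]
      refine lt_of_lt_of_le (mem_degreeLT.mp r.2) ?_
      exact_mod_cast Nat.cast_le.mpr (by omega : d - 1 ≤ d)
    have h2 : ((X : F[X]) ^ d + r.1).degree = d := by
      rw [degree_add_eq_left_of_degree_lt h1, degree_X_pow]
    exact natDegree_eq_of_degree_eq_some h2
  set Φ : degreeLT F (d - 1) → Quot (polyFunRel F d) :=
    fun r => Quot.mk _ ⟨X ^ d + r.1, hdeg r⟩ with hΦdef
  have hsurj : Function.Surjective Φ := by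
    intro y
    induction y using Quot.ind with
    | _ fp =>
      obtain ⟨f, hf⟩ := fp
      -- f has degree d ≥ 2, so f ≠ 0
      have hf0 : f ≠ 0 := by
        intro h
        rw [h, natDegree_zero] at hf
        omega
      set c := f.leadingCoeff with hc
      have hcne : c ≠ 0 := leadingCoeff_ne_zero.mpr hf0
      -- find a unit u with u^(d-1) = c
      have hcop : (Nat.card Fˣ).Coprime (d - 1) := by
        rwa [Nat.card_eq_fintype_card, Fintype.card_units]
      set a : Fˣ := (powCoprime hcop).symm (Units.mk0 c hcne) with ha
      have ha2 : a ^ (d - 1) = Units.mk0 c hcne := by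
        rw [← powCoprime_apply hcop, ha]
        exact Equiv.apply_symm_apply _ _
      set u : F := (a : F) with hudef
      have hu : u ≠ 0 := a.ne_zero
      have huc : u ^ (d - 1) = c := by
        have := congrArg (Units.val) ha2
        simpa [hudef] using this
      -- step 1 : make monic
      set g₁ : F[X] := C u * f.comp (C u⁻¹ * X) with hg₁
      have hcompdeg : (f.comp (C u⁻¹ * X)).natDegree = d := by
        rw [natDegree_comp, hf, natDegree_C_mul (inv_ne_zero hu), natDegree_X, mul_one]
      have hg₁deg : g₁.natDegree = d := by
        rw [hg₁, natDegree_C_mul hu, hcompdeg]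
      have hg₁monic : g₁.Monic := by
        unfold Polynomial.Monic
        rw [hg₁, leadingCoeff_mul, leadingCoeff_C, leadingCoeff_comp (by
          rw [natDegree_C_mul (inv_ne_zero hu), natDegree_X]
          exact one_ne_zero)]
        rw [leadingCoeff_mul, leadingCoeff_C, leadingCoeff_X, mul_one, hf, ← hc]
        have hud : u ^ d = c * u := by
          rw [show d = (d - 1) + 1 by omega, pow_succ, huc]
        rw [inv_pow, hud]
        field_simp
        all_goals first | ring | exact one_ne_zero
      -- step 2 : kill subleading coefficient
      set e : F := -(g₁.coeff (d - 1)) / d with he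
      set g₂ : F[X] := g₁.comp (X + C e) + C (-e) with hg₂
      have hcomp2deg : (g₁.comp (X + C e)).natDegree = d := by
        rw [natDegree_comp, hg₁deg, natDegree_X_add_C, mul_one]
      have hg₂deg : g₂.natDegree = d := by
        rw [hg₂, natDegree_add_C, hcomp2deg]
      have hg₂monic : g₂.Monic := by
        unfold Polynomial.Monic
        rw [Monic.def] at hg₁monic
        have : (g₁.comp (X + C e)).leadingCoeff = 1 := by
          rw [leadingCoeff_comp (by rw [natDegree_X_add_C]; omega), hg₁monic,
            (monic_X_add_C e).leadingCoeff, one_mul, one_pow]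
        rw [leadingCoeff, hg₂deg, hg₂, coeff_add, coeff_C,
          if_neg (by omega : ¬ d = 0), add_zero, ← hcomp2deg, coeff_natDegree, this]
      have hsub : g₂.coeff (d - 1) = 0 := by
        rw [hg₂, coeff_add, coeff_C, if_neg (by omega : ¬ d - 1 = 0), add_zero,
          aux_coeff_comp g₁ hd hg₁deg hg₁monic e, he]
        field_simp
        ring
      -- the remainder polynomial
      have hmem : g₂ - X ^ d ∈ degreeLT F (d - 1) := by
        rw [mem_degreeLT]
        rw [Polynomial.degree_lt_iff_coeff_zero]
        intro k hk
        have hk' : d - 1 ≤ k := by exact_mod_cast hk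
        rw [coeff_sub, coeff_X_pow]
        rcases eq_or_lt_of_le hk' with h | h
        · rw [← h, hsub, if_neg (by omega : ¬ d - 1 = d), sub_zero]
        · rcases eq_or_lt_of_le (by omega : d ≤ k) with h2 | h2
          · rw [← h2, if_pos rfl]
            have : g₂.coeff d = 1 := by
              have := hg₂monic.coeff_natDegree
              rwa [hg₂deg] at this
            rw [this, sub_self]
          · rw [if_neg (by omega : ¬ k = d),
              coeff_eq_zero_of_natDegree_lt (by rw [hg₂deg]; omega), sub_zero]
      -- the conjugating bijection
      have hune : u ≠ 0 := hu
      set σ : F ≃ F := (Equiv.mulLeft₀ u hune).trans (Equiv.subRight e) with hσ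
      have hσapp : ∀ x, σ x = u * x - e := by
        intro x
        simp [hσ, Equiv.subRight_apply]
      have key : ⇑σ ∘ (fun x => Polynomial.eval x f) = (fun x => Polynomial.eval x g₂) ∘ ⇑σ := by
        funext x
        simp only [Function.comp_apply, hσapp]
        rw [hg₂, hg₁]
        simp only [eval_add, eval_comp, eval_mul, eval_C, eval_X, eval_add]
        rw [sub_add_cancel, inv_mul_cancel_left₀ hu]
        ring
      refine ⟨⟨g₂ - X ^ d, hmem⟩, ?_⟩
      rw [hΦdef]
      apply Quot.sound
      refine ⟨σ.symm, ?_⟩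
      have hXd : (X : F[X]) ^ d + (g₂ - X ^ d) = g₂ := by ring
      simp only [hXd]
      exact flip_conj σ _ _ key
  calc numFunctionalGraphs F d ≤ Nat.card (degreeLT F (d - 1)) :=
        Nat.card_le_card_of_surjective Φ hsurj
    _ = Fintype.card F ^ (d - 1) := by
        rw [Nat.card_congr (degreeLTEquiv F (d - 1)).toEquiv]
        simp [Nat.card_eq_fintype_card]
end

section
/- For any positive integers k and h and any γ, δ ∈ Γ_e, one has G_{k+h,γ} ≡ G_{h,γ} (mod G_{k,δ}) in F_q[X], i.e., G_{k,δ} divides G_{k+h,γ} − G_{h,γ}. -/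
open Polynomial in
/-- The iterates `F_0(X) = X`, `F_k(X) = F_{k-1}(X)^d + X`. -/
noncomputable def Fiter (F : Type*) [Field F] (d : ℕ) : ℕ → Polynomial F
  | 0 => Polynomial.X
  | (k + 1) => (Fiter F d k) ^ d + Polynomial.X

/-- The polynomials `G_{k,γ}(X) = γ·F_k(X) − X`. -/
noncomputable def Gpoly (F : Type*) [Field F] (d : ℕ) (γ : F) (k : ℕ) : Polynomial F :=
  Polynomial.C γ * Fiter F d k - Polynomial.X

open Polynomial in
lemma key_dvd (F : Type*) [Field F] (d : ℕ) (δ : F) (hδd : δ ^ d = 1)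
    (k : ℕ) : ∀ h : ℕ, 1 ≤ h → Gpoly F d δ k ∣ (Fiter F d (k + h) - Fiter F d h) := by
  intro h
  induction h with
  | zero => intro hc; omega
  | succ n ih =>
    intro _
    rcases Nat.eq_zero_or_pos n with hn | hn
    · subst hn
      have h1 : Fiter F d (k + 1) - Fiter F d 1 = Fiter F d k ^ d - X ^ d := by
        show (Fiter F d k ^ d + X) - ((Fiter F d 0) ^ d + X) = _
        show (Fiter F d k ^ d + X) - (X ^ d + X) = _
        ring
      rw [h1]
      have h2 : (C δ * Fiter F d k) ^ d = Fiter F d k ^ d := by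
        rw [mul_pow, ← C_pow, hδd, C_1, one_mul]
      have := sub_dvd_pow_sub_pow (C δ * Fiter F d k) (X : Polynomial F) d
      rw [h2] at this
      exact this
    · have hdvd := ih hn
      have h1 : Fiter F d (k + (n + 1)) - Fiter F d (n + 1)
          = Fiter F d (k + n) ^ d - Fiter F d n ^ d := by
        show (Fiter F d (k + n) ^ d + X) - (Fiter F d n ^ d + X) = _
        ring
      rw [h1]
      exact dvd_trans hdvd (sub_dvd_pow_sub_pow _ _ d)

theorem stmt5 (F : Type*) [Field F] [Fintype F] (d : ℕ) (hd : 2 ≤ d)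
    (e : ℕ) (he : e = Nat.gcd d (Fintype.card F - 1))
    (γ δ : F) (hγ : γ ^ e = 1) (hδ : δ ^ e = 1)
    (k h : ℕ) (hk : 1 ≤ k) (hh : 1 ≤ h) :
    Gpoly F d δ k ∣ (Gpoly F d γ (k + h) - Gpoly F d γ h) := by
  have hed : e ∣ d := he ▸ Nat.gcd_dvd_left _ _
  have hδd : δ ^ d = 1 := by
    obtain ⟨m, rfl⟩ := hed
    rw [pow_mul, hδ, one_pow]
  have h1 : Gpoly F d γ (k + h) - Gpoly F d γ h
      = Polynomial.C γ * (Fiter F d (k + h) - Fiter F d h) := by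
    unfold Gpoly; ring
  rw [h1]
  exact (key_dvd F d δ hδd k h hh).mul_left _
end

section
/- For any positive integers k and m and any γ ∈ Γ_e, the greatest common divisor of G_{k,γ} and G_{m,γ} in F_q[X] is associated to G_{gcd(k,m),γ} (i.e., gcd(G_{k,γ}, G_{m,γ}) equals G_{gcd(k,m),γ} up to a nonzero scalar factor). -/
section Aux

open Polynomial

variable {F : Type*} [Field F] [DecidableEq F] {d : ℕ} {γ : F}

/-- If γ^d = 1, then G_m divides F_{m+j} - F_j for j ≥ 1. -/
lemma key_dvd_s6 (hγd : γ ^ d = 1) (m : ℕ) :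
    ∀ j, 1 ≤ j → Gpoly F d γ m ∣ Fiter F d (m + j) - Fiter F d j := by
  intro j hj
  induction j with
  | zero => omega
  | succ j ih =>
    rcases Nat.eq_or_lt_of_le hj with h1 | h1
    · -- j + 1 = 1, so j = 0
      have hj0 : j = 0 := by omega
      subst hj0
      have : Fiter F d (m + 1) - Fiter F d 1
          = (Polynomial.C γ * Fiter F d m) ^ d - (Polynomial.X : Polynomial F) ^ d := by
        simp only [Fiter, mul_pow, ← Polynomial.C_pow, hγd, Polynomial.C_1, one_mul]
        ring
      rw [this]
      exact sub_dvd_pow_sub_pow _ _ d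
    · have hj1 : 1 ≤ j := by omega
      have := ih hj1
      have h2 : Fiter F d (m + j) - Fiter F d j ∣
          Fiter F d (m + (j + 1)) - Fiter F d (j + 1) := by
        have : Fiter F d (m + (j + 1)) - Fiter F d (j + 1)
            = Fiter F d (m + j) ^ d - Fiter F d j ^ d := by
          have hmj : m + (j + 1) = (m + j) + 1 := by omega
          rw [hmj]
          simp only [Fiter]
          ring
        rw [this]
        exact sub_dvd_pow_sub_pow _ _ d
      exact dvd_trans this h2

lemma gdvd (hγd : γ ^ d = 1) (m j : ℕ) (hj : 1 ≤ j) :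
    Gpoly F d γ m ∣ Gpoly F d γ (m + j) - Gpoly F d γ j := by
  have h := key_dvd_s6 hγd m j hj
  have : Gpoly F d γ (m + j) - Gpoly F d γ j
      = Polynomial.C γ * (Fiter F d (m + j) - Fiter F d j) := by
    simp only [Gpoly]; ring
  rw [this]
  exact Dvd.dvd.mul_left h _

lemma gcd_assoc_comm (a b : Polynomial F) :
    Associated (EuclideanDomain.gcd a b) (EuclideanDomain.gcd b a) :=
  associated_of_dvd_dvd
    (EuclideanDomain.dvd_gcd (EuclideanDomain.gcd_dvd_right a b) (EuclideanDomain.gcd_dvd_left a b))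
    (EuclideanDomain.dvd_gcd (EuclideanDomain.gcd_dvd_right b a) (EuclideanDomain.gcd_dvd_left b a))

lemma main_assoc (hγd : γ ^ d = 1) :
    ∀ n k m, k + m = n → 1 ≤ k → 1 ≤ m →
      Associated (EuclideanDomain.gcd (Gpoly F d γ k) (Gpoly F d γ m))
        (Gpoly F d γ (Nat.gcd k m)) := by
  intro n
  induction n using Nat.strong_induction_on with
  | _ n ih =>
    intro k m hn hk hm
    rcases lt_trichotomy k m with hlt | heq | hgt
    · -- k < m; m = k + j
      set j := m - k with hj
      have hm' : m = k + j := by omega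
      have hj1 : 1 ≤ j := by omega
      have hdvd : Gpoly F d γ k ∣ Gpoly F d γ m - Gpoly F d γ j := by
        rw [hm']; exact gdvd hγd k j hj1
      have hassoc : Associated (EuclideanDomain.gcd (Gpoly F d γ k) (Gpoly F d γ m))
          (EuclideanDomain.gcd (Gpoly F d γ k) (Gpoly F d γ j)) := by
        apply associated_of_dvd_dvd
        · apply EuclideanDomain.dvd_gcd (EuclideanDomain.gcd_dvd_left _ _)
          have h1 := EuclideanDomain.gcd_dvd_left (Gpoly F d γ k) (Gpoly F d γ m)
          have h2 := EuclideanDomain.gcd_dvd_right (Gpoly F d γ k) (Gpoly F d γ m)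
          have := h1.trans hdvd
          have : Gpoly F d γ j = Gpoly F d γ m - (Gpoly F d γ m - Gpoly F d γ j) := by ring
          rw [this]
          exact dvd_sub h2 (h1.trans hdvd)
        · apply EuclideanDomain.dvd_gcd (EuclideanDomain.gcd_dvd_left _ _)
          have h1 := EuclideanDomain.gcd_dvd_left (Gpoly F d γ k) (Gpoly F d γ j)
          have h2 := EuclideanDomain.gcd_dvd_right (Gpoly F d γ k) (Gpoly F d γ j)
          have : Gpoly F d γ m = Gpoly F d γ j + (Gpoly F d γ m - Gpoly F d γ j) := by ring
          rw [this]
          exact dvd_add h2 (h1.trans hdvd)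
      have hrec := ih (k + j) (by omega) k j rfl hk hj1
      have hgcdeq : Nat.gcd k m = Nat.gcd k j := by
        rw [hm', Nat.add_comm k j, Nat.gcd_add_self_right]
      rw [hgcdeq]
      exact hassoc.trans hrec
    · subst heq
      rw [Nat.gcd_self]
      exact associated_of_dvd_dvd (EuclideanDomain.gcd_dvd_left _ _)
        (EuclideanDomain.dvd_gcd dvd_rfl dvd_rfl)
    · -- m < k
      set j := k - m with hj
      have hk' : k = m + j := by omega
      have hj1 : 1 ≤ j := by omega
      have hdvd : Gpoly F d γ m ∣ Gpoly F d γ k - Gpoly F d γ j := by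
        rw [hk']; exact gdvd hγd m j hj1
      have hassoc : Associated (EuclideanDomain.gcd (Gpoly F d γ m) (Gpoly F d γ k))
          (EuclideanDomain.gcd (Gpoly F d γ m) (Gpoly F d γ j)) := by
        apply associated_of_dvd_dvd
        · apply EuclideanDomain.dvd_gcd (EuclideanDomain.gcd_dvd_left _ _)
          have h1 := EuclideanDomain.gcd_dvd_left (Gpoly F d γ m) (Gpoly F d γ k)
          have h2 := EuclideanDomain.gcd_dvd_right (Gpoly F d γ m) (Gpoly F d γ k)
          have : Gpoly F d γ j = Gpoly F d γ k - (Gpoly F d γ k - Gpoly F d γ j) := by ring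
          rw [this]
          exact dvd_sub h2 (h1.trans hdvd)
        · apply EuclideanDomain.dvd_gcd (EuclideanDomain.gcd_dvd_left _ _)
          have h1 := EuclideanDomain.gcd_dvd_left (Gpoly F d γ m) (Gpoly F d γ j)
          have h2 := EuclideanDomain.gcd_dvd_right (Gpoly F d γ m) (Gpoly F d γ j)
          have : Gpoly F d γ k = Gpoly F d γ j + (Gpoly F d γ k - Gpoly F d γ j) := by ring
          rw [this]
          exact dvd_add h2 (h1.trans hdvd)
      have hrec := ih (m + j) (by omega) m j rfl hm hj1
      have hgcdeq : Nat.gcd k m = Nat.gcd m j := by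
        rw [Nat.gcd_comm, hk', Nat.add_comm m j, Nat.gcd_add_self_right]
      rw [hgcdeq]
      exact ((gcd_assoc_comm _ _).trans hassoc).trans hrec

end Aux

theorem stmt6 (F : Type*) [Field F] [Fintype F] [DecidableEq F]
    (d : ℕ) (hd : 2 ≤ d)
    (e : ℕ) (he : e = Nat.gcd d (Fintype.card F - 1))
    (γ : F) (hγ : γ ^ e = 1)
    (k m : ℕ) (hk : 1 ≤ k) (hm : 1 ≤ m) :
    Associated (EuclideanDomain.gcd (Gpoly F d γ k) (Gpoly F d γ m))
      (Gpoly F d γ (Nat.gcd k m)) := by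
  have hed : e ∣ d := he ▸ Nat.gcd_dvd_left _ _
  obtain ⟨c, hc⟩ := hed
  have hγd : γ ^ d = 1 := by rw [hc, pow_mul, hγ, one_pow]
  exact main_assoc hγd (k + m) k m rfl hk hm
end

section
/- Let A, B, C be nonzero polynomials in F_q[X] satisfying A + B + C = 0 and gcd(A, B, C) = 1. If deg A ≥ deg rad(ABC), then the formal derivatives A', B', C' are all zero. -/
open UniqueFactorizationMonoid in
/-- Mason's theorem (polynomial abc). Here `radical` is the product of the
distinct monic irreducible divisors. -/
theorem stmt8 (F : Type*) [Field F] [Fintype F] [DecidableEq F]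
    (A B C : Polynomial F) (hA : A ≠ 0) (hB : B ≠ 0) (hC : C ≠ 0)
    (hsum : A + B + C = 0)
    (hgcd : ∀ P : Polynomial F, P ∣ A → P ∣ B → P ∣ C → IsUnit P)
    (hdeg : (radical (A * B * C)).natDegree ≤ A.natDegree) :
    Polynomial.derivative A = 0 ∧ Polynomial.derivative B = 0 ∧
      Polynomial.derivative C = 0 := by
  have cop : ∀ P : Polynomial F, P ∣ A → P ∣ B → IsUnit P := by
    intro P hPA hPB
    exact hgcd P hPA hPB (by
      have : C = -(A + B) := by linear_combination hsum
      rw [this]; exact (dvd_add hPA hPB).neg_right)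
  have hab : IsCoprime A B := by
    rw [← EuclideanDomain.gcd_isUnit_iff]
    exact cop _ (EuclideanDomain.gcd_dvd_left A B) (EuclideanDomain.gcd_dvd_right A B)
  have hbc : IsCoprime B C := by
    rw [← EuclideanDomain.gcd_isUnit_iff]
    have h1 := EuclideanDomain.gcd_dvd_left B C
    have h2 := EuclideanDomain.gcd_dvd_right B C
    have hA' : A = -(B + C) := by linear_combination hsum
    exact hgcd _ (by rw [hA']; exact (dvd_add h1 h2).neg_right) h1 h2
  have hca : IsCoprime C A := by
    rw [← EuclideanDomain.gcd_isUnit_iff]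
    have h1 := EuclideanDomain.gcd_dvd_left C A
    have h2 := EuclideanDomain.gcd_dvd_right C A
    have hB' : B = -(A + C) := by linear_combination hsum
    exact hgcd _ h2 (by rw [hB']; exact (dvd_add h2 h1).neg_right) h1
  rcases Polynomial.abc hA hB hC hab hsum with h | h
  · have := h.1; omega
  · exact h
end

section
/- Let q be a prime power with gcd(d−1, q) = 1, let d ≥ 3 be an integer with e := gcd(d, q−1) ≥ 2, and let J ≥ 2 be an integer. For any collection of integers α_{j,γ} ∈ {0, 1, …, e−1} indexed by 2 ≤ j ≤ J and γ ∈ Γ_e \ {1}, not all equal to zero, the product ∏_{j=2}^{J} ∏_{γ ∈ Γ_e \ {1}} G_{j,γ}^{α_{j,γ}} is not equal to P^e for any polynomial P with coefficients in the algebraic closure of F_q. -/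
open Polynomial

section Aux

variable {E : Type*} [Field E] {d : ℕ}

lemma Fiter_zero : Fiter E d 0 = X := rfl

lemma Fiter_succ (k : ℕ) : Fiter E d (k + 1) = (Fiter E d k) ^ d + X := rfl

lemma Fiter_natDegree (hd : 2 ≤ d) (k : ℕ) : (Fiter E d k).natDegree = d ^ k := by
  induction k with
  | zero => simp [Fiter_zero]
  | succ k ih =>
    have hdegp : ((Fiter E d k) ^ d).natDegree = d ^ (k + 1) := by
      rw [natDegree_pow, ih, pow_succ, mul_comm]
    have h2 : 2 ≤ d ^ (k + 1) := le_trans hd (Nat.le_self_pow (Nat.succ_ne_zero k) d)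
    have hlt : natDegree (X : E[X]) < natDegree ((Fiter E d k) ^ d) := by
      rw [natDegree_X, hdegp]; omega
    rw [Fiter_succ, natDegree_add_eq_left_of_natDegree_lt hlt, hdegp]

lemma X_dvd_Fiter (hd : 2 ≤ d) (k : ℕ) : (X : E[X]) ∣ Fiter E d k := by
  induction k with
  | zero => rw [Fiter_zero]
  | succ k ih =>
    rw [Fiter_succ]
    exact dvd_add (dvd_pow ih (by omega : d ≠ 0)) dvd_rfl

lemma Fiter_coeff_one (hd : 2 ≤ d) (k : ℕ) : (Fiter E d k).coeff 1 = 1 := by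
  induction k with
  | zero => simp [Fiter_zero]
  | succ k ih =>
    have hX2 : (X : E[X]) ^ 2 ∣ (Fiter E d k) ^ d :=
      (pow_dvd_pow_of_dvd (X_dvd_Fiter hd k) 2).trans (pow_dvd_pow _ hd)
    obtain ⟨h, hh⟩ := hX2
    have hc : ((Fiter E d k) ^ d).coeff 1 = 0 := by
      rw [hh, mul_comm, coeff_mul_X_pow']
      norm_num
    rw [Fiter_succ, coeff_add, hc, coeff_X_one, zero_add]

lemma Gpoly_coeff_one (hd : 2 ≤ d) (c : E) (k : ℕ) : (Gpoly E d c k).coeff 1 = c - 1 := by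
  rw [Gpoly, coeff_sub, coeff_C_mul, Fiter_coeff_one hd, coeff_X_one, mul_one]

lemma Gpoly_ne_zero (hd : 2 ≤ d) {c : E} (hc : c ≠ 1) (k : ℕ) : Gpoly E d c k ≠ 0 := by
  intro h
  apply hc
  have h1 := Gpoly_coeff_one hd c k
  rw [h, coeff_zero] at h1
  exact sub_eq_zero.mp h1.symm

lemma Gpoly_natDegree (hd : 2 ≤ d) {c : E} (hc : c ≠ 0) {k : ℕ} (hk : 1 ≤ k) :
    (Gpoly E d c k).natDegree = d ^ k := by
  have h1 : (C c * Fiter E d k).natDegree = d ^ k := by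
    rw [natDegree_C_mul hc, Fiter_natDegree hd]
  have h2 : 2 ≤ d ^ k := le_trans hd (Nat.le_self_pow (by omega) d)
  have hlt : natDegree (X : E[X]) < natDegree (C c * Fiter E d k) := by
    rw [natDegree_X, h1]; omega
  rw [Gpoly, natDegree_sub_eq_left_of_natDegree_lt hlt, h1]

lemma Gpoly_eval (c : E) (k : ℕ) (x : E) :
    (Gpoly E d c k).eval x = c * (Fiter E d k).eval x - x := by
  simp [Gpoly]

lemma pow_sub_one_dvd_derivative {p : E[X]} {x : E} {μ : ℕ} (h : (X - C x) ^ μ ∣ p) :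
    (X - C x) ^ (μ - 1) ∣ derivative p := by
  obtain ⟨q, rfl⟩ := h
  rw [derivative_mul, derivative_pow, derivative_X_sub_C, mul_one]
  cases μ with
  | zero => simp
  | succ m =>
    simp only [Nat.add_sub_cancel]
    exact dvd_add ⟨C ((m : E) + 1) * q, by push_cast; ring⟩ ⟨(X - C x) * derivative q, by ring⟩

lemma key_identity (hd : 2 ≤ d) (m : ℕ) (c : E) :
    Fiter E d m * derivative (Gpoly E d c (m + 1))
      - C (d : E) * derivative (Fiter E d m) * Gpoly E d c (m + 1)
    = (C c - 1) * (Fiter E d m - C (d : E) * X * derivative (Fiter E d m)) := by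
  have hF : (Fiter E d m) ^ d = (Fiter E d m) ^ (d - 1) * Fiter E d m :=
    (pow_sub_one_mul (by omega : d ≠ 0) _).symm
  rw [Gpoly, Fiter_succ]
  simp only [derivative_sub, derivative_mul, derivative_C, zero_mul, zero_add,
    derivative_add, derivative_pow, derivative_X, mul_one]
  rw [hF]
  ring

end Aux

section Aux2

variable {E : Type*} [Field E] {d : ℕ}

/-- The auxiliary polynomial `K_m = F_m - d·X·F_m'` catching multiple roots. -/
noncomputable def Kpoly (E : Type*) [Field E] (d m : ℕ) : E[X] :=
  Fiter E d m - C (d : E) * X * derivative (Fiter E d m)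

lemma Kpoly_coeff_one (hd : 2 ≤ d) (m : ℕ) : (Kpoly E d m).coeff 1 = 1 - (d : E) := by
  have h1 : (C (d : E) * (X * derivative (Fiter E d m))).coeff 1 = (d : E) := by
    rw [coeff_C_mul, coeff_X_mul, coeff_derivative, Fiter_coeff_one hd]
    norm_num
  rw [Kpoly, coeff_sub, Fiter_coeff_one hd, mul_assoc, h1]

lemma Kpoly_ne_zero (hd : 2 ≤ d) (hd1 : (d : E) ≠ 1) (m : ℕ) : Kpoly E d m ≠ 0 := by
  intro h
  have h1 := Kpoly_coeff_one (E := E) hd m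
  rw [h, coeff_zero] at h1
  exact hd1 (sub_eq_zero.mp h1.symm).symm

lemma Kpoly_natDegree_le (hd : 2 ≤ d) (m : ℕ) : (Kpoly E d m).natDegree ≤ d ^ m := by
  have h1 : (C (d : E) * X * derivative (Fiter E d m)).natDegree ≤ d ^ m := by
    calc (C (d : E) * X * derivative (Fiter E d m)).natDegree
        ≤ (C (d : E) * X).natDegree + (derivative (Fiter E d m)).natDegree :=
          natDegree_mul_le
      _ ≤ 1 + ((Fiter E d m).natDegree - 1) := by
          gcongr
          · exact (natDegree_C_mul_le _ _).trans (by simp)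
          · exact natDegree_derivative_le _
      _ ≤ d ^ m := by
          rw [Fiter_natDegree hd]
          have : 1 ≤ d ^ m := Nat.one_le_pow _ _ (by omega)
          omega
  refine (natDegree_sub_le _ _).trans ?_
  rw [Fiter_natDegree hd]
  omega

lemma map_Fiter {L : Type*} [Field L] (φ : E →+* L) (k : ℕ) :
    (Fiter E d k).map φ = Fiter L d k := by
  induction k with
  | zero => simp [Fiter_zero]
  | succ k ih => rw [Fiter_succ, Fiter_succ, Polynomial.map_add, Polynomial.map_pow, ih, map_X]

lemma map_Gpoly {L : Type*} [Field L] (φ : E →+* L) (c : E) (k : ℕ) :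
    (Gpoly E d c k).map φ = Gpoly L d (φ c) k := by
  rw [Gpoly, Gpoly, Polynomial.map_sub, Polynomial.map_mul, map_C, map_X, map_Fiter]

/-- `W_0 = u·X`, `W_{i+1} = W_i^d + X` (used with `u = δ⁻¹`). -/
noncomputable def Wrec (E : Type*) [Field E] (d : ℕ) (u : E) : ℕ → E[X]
  | 0 => C u * X
  | (i + 1) => (Wrec E d u i) ^ d + X

lemma Wrec_natDegree (hd : 2 ≤ d) {u : E} (hu : u ≠ 0) (i : ℕ) :
    (Wrec E d u i).natDegree = d ^ i := by
  induction i with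
  | zero => show (C u * X).natDegree = 1; rw [natDegree_C_mul hu, natDegree_X]
  | succ i ih =>
    have hdegp : ((Wrec E d u i) ^ d).natDegree = d ^ (i + 1) := by
      rw [natDegree_pow, ih, pow_succ, mul_comm]
    have h2 : 2 ≤ d ^ (i + 1) := le_trans hd (Nat.le_self_pow (Nat.succ_ne_zero i) d)
    have hlt : natDegree (X : E[X]) < natDegree ((Wrec E d u i) ^ d) := by
      rw [natDegree_X, hdegp]; omega
    show ((Wrec E d u i) ^ d + X).natDegree = d ^ (i + 1)
    rw [natDegree_add_eq_left_of_natDegree_lt hlt, hdegp]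

/-- The polynomial whose roots catch common roots of `G_{k,c}` and `G_{j,δ}`, `j < k`. -/
noncomputable def Vpoly (E : Type*) [Field E] (d : ℕ) (c δ : E) (i : ℕ) : E[X] :=
  C c * Wrec E d δ⁻¹ i - X

lemma Vpoly_natDegree (hd : 2 ≤ d) {c δ : E} (hc : c ≠ 0) (hδ : δ ≠ 0) {i : ℕ} (hi : 1 ≤ i) :
    (Vpoly E d c δ i).natDegree = d ^ i := by
  have h1 : (C c * Wrec E d δ⁻¹ i).natDegree = d ^ i := by
    rw [natDegree_C_mul hc, Wrec_natDegree hd (inv_ne_zero hδ)]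
  have h2 : 2 ≤ d ^ i := le_trans hd (Nat.le_self_pow (by omega) d)
  have hlt : natDegree (X : E[X]) < natDegree (C c * Wrec E d δ⁻¹ i) := by
    rw [natDegree_X, h1]; omega
  rw [Vpoly, natDegree_sub_eq_left_of_natDegree_lt hlt, h1]

lemma Vpoly_ne_zero (hd : 2 ≤ d) {c δ : E} (hc : c ≠ 0) (hδ : δ ≠ 0) {i : ℕ} (hi : 1 ≤ i) :
    Vpoly E d c δ i ≠ 0 := by
  intro h
  have := Vpoly_natDegree hd hc hδ hi
  rw [h, natDegree_zero] at this
  have h2 : 2 ≤ d ^ i := le_trans hd (Nat.le_self_pow (by omega) d)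
  omega

/-- Roots of the `V` polynomial catch common roots. -/
lemma Vpoly_isRoot (hd : 2 ≤ d) {c δ : E} (hδ : δ ≠ 0) {j k : ℕ} (hjk : j ≤ k) {x : E}
    (hgj : (Gpoly E d δ j).eval x = 0) (hgk : (Gpoly E d c k).eval x = 0) :
    (Vpoly E d c δ (k - j)).eval x = 0 := by
  have hFj : (Fiter E d j).eval x = δ⁻¹ * x := by
    rw [Gpoly_eval] at hgj
    have h2 : δ * (Fiter E d j).eval x = x := sub_eq_zero.mp hgj
    field_simp
    linear_combination h2
  have key : ∀ i, (Wrec E d δ⁻¹ i).eval x = (Fiter E d (j + i)).eval x := by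
    intro i
    induction i with
    | zero => simp [Wrec, hFj]
    | succ i ih =>
      show ((Wrec E d δ⁻¹ i) ^ d + X).eval x = _
      rw [show j + (i+1) = (j+i) + 1 from rfl, Fiter_succ]
      simp [ih]
  have hk' : j + (k - j) = k := by omega
  have hV : (Vpoly E d c δ (k - j)).eval x = c * (Fiter E d k).eval x - x := by
    rw [Vpoly, eval_sub, eval_mul, eval_C, eval_X, key (k - j), hk']
  rw [hV, ← Gpoly_eval, hgk]

end Aux2

section Aux3

variable {E : Type*} [Field E] {d : ℕ}

lemma mult_root_dvd_Kpoly (hd : 2 ≤ d) {c : E} (hc1 : c ≠ 1) (m : ℕ) (x : E) :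
    (X - C x) ^ (rootMultiplicity x (Gpoly E d c (m + 1)) - 1) ∣ Kpoly E d m := by
  set g := Gpoly E d c (m + 1) with hg
  set μ := rootMultiplicity x g with hμ
  have h1 : (X - C x) ^ μ ∣ g := pow_rootMultiplicity_dvd g x
  have h2 : (X - C x) ^ (μ - 1) ∣ derivative g := pow_sub_one_dvd_derivative h1
  have h3 : (X - C x) ^ (μ - 1) ∣ g := (pow_dvd_pow _ (Nat.sub_le μ 1)).trans h1
  have h4 : (X - C x) ^ (μ - 1) ∣ (C c - 1) * Kpoly E d m := by
    simp only [Kpoly]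
    rw [← key_identity hd m c]
    exact dvd_sub (h2.mul_left _) (h3.mul_left _)
  have hu : IsUnit (C c - 1 : E[X]) := by
    rw [show (1 : E[X]) = C 1 from (map_one C).symm, ← C_sub]
    exact isUnit_C.mpr (Ne.isUnit (sub_ne_zero.mpr hc1))
  exact (hu.dvd_mul_left).mp h4

lemma count_roots_prod {ι : Type*} [DecidableEq E] (s : Finset ι) (f : ι → E[X])
    (hf : ∀ i ∈ s, f i ≠ 0) (x : E) :
    (∏ i ∈ s, f i).roots.count x = ∑ i ∈ s, (f i).roots.count x := by
  classical
  induction s using Finset.induction with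
  | empty => simp
  | insert a s hni ih =>
    have h1 : f a ≠ 0 := hf a (Finset.mem_insert_self a s)
    have h2 : ∀ i ∈ s, f i ≠ 0 := fun i hi => hf i (Finset.mem_insert_of_mem hi)
    have h3 : (∏ i ∈ s, f i) ≠ 0 := Finset.prod_ne_zero_iff.mpr h2
    rw [Finset.prod_insert hni, roots_mul (mul_ne_zero h1 h3), Multiset.count_add,
      Finset.sum_insert hni, ih h2]

lemma geom_bound2 {d E : ℕ} (hd : 1 ≤ d) (hEd : E + 1 ≤ d) :
    ∀ k, 2 ≤ k → E * (∑ j ∈ Finset.Icc 2 (k - 1), d ^ (k - j)) + d ≤ d ^ (k - 1) := by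
  refine Nat.le_induction ?_ ?_
  · simp
  · intro n hn ih
    obtain ⟨k', hk'⟩ : ∃ k', n = k' + 1 := ⟨n - 1, by omega⟩
    subst hk'
    simp only [Nat.add_sub_cancel] at ih ⊢
    rw [Finset.sum_Icc_succ_top (by omega : 2 ≤ k' + 1)]
    have hstep : ∑ j ∈ Finset.Icc 2 k', d ^ (k' + 1 + 1 - j)
        = (∑ j ∈ Finset.Icc 2 k', d ^ (k' + 1 - j)) * d := by
      rw [Finset.sum_mul]
      refine Finset.sum_congr rfl fun j hj => ?_
      obtain ⟨h1, h2⟩ := Finset.mem_Icc.mp hj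
      rw [← pow_succ]
      congr 1
      omega
    rw [hstep, show k' + 1 + 1 - (k' + 1) = 1 from by omega, pow_one]
    set T := ∑ j ∈ Finset.Icc 2 k', d ^ (k' + 1 - j) with hT
    calc E * (T * d + d) + d = (E * T + (E + 1)) * d := by ring
      _ ≤ (E * T + d) * d := Nat.mul_le_mul_right d (by omega)
      _ ≤ d ^ k' * d := Nat.mul_le_mul_right d ih
      _ = d ^ (k' + 1) := (pow_succ d k').symm

end Aux3

theorem stmt9 (F : Type*) [Field F] [Fintype F] [DecidableEq F]
    (d : ℕ) (hd : 3 ≤ d)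
    (hdq : Nat.gcd (d - 1) (Fintype.card F) = 1)
    (e : ℕ) (he : e = Nat.gcd d (Fintype.card F - 1)) (he2 : 2 ≤ e)
    (J : ℕ) (hJ : 2 ≤ J)
    (α : ℕ → F → ℕ) (hα : ∀ j γ, α j γ ≤ e - 1)
    (hne : ∃ j ∈ Finset.Icc 2 J,
      ∃ γ ∈ Finset.univ.filter (fun γ : F => γ ^ e = 1 ∧ γ ≠ 1), α j γ ≠ 0)
    (P : Polynomial (AlgebraicClosure F)) :
    (∏ j ∈ Finset.Icc 2 J,
        ∏ γ ∈ Finset.univ.filter (fun γ : F => γ ^ e = 1 ∧ γ ≠ 1),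
          (Gpoly F d γ j) ^ (α j γ)).map (algebraMap F (AlgebraicClosure F))
      ≠ P ^ e := by

  classical
  intro hEq
  set φ := algebraMap F (AlgebraicClosure F) with hφdef
  have hφ : Function.Injective φ := (algebraMap F (AlgebraicClosure F)).injective
  have hd2 : 2 ≤ d := by omega
  set Γ' : Finset F := Finset.univ.filter (fun γ : F => γ ^ e = 1 ∧ γ ≠ 1) with hΓ'
  -- the maximal level with a nonzero exponent
  set S : Finset ℕ := (Finset.Icc 2 J).filter (fun j => ∃ γ ∈ Γ', α j γ ≠ 0) with hSdef
  have hS : S.Nonempty := by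
    obtain ⟨j, hj, γ, hγ, hαn⟩ := hne
    exact ⟨j, Finset.mem_filter.mpr ⟨hj, ⟨γ, hγ, hαn⟩⟩⟩
  obtain ⟨j0, hj0def⟩ : ∃ n, S.max' hS = n := ⟨_, rfl⟩
  have hj0S : j0 ∈ S := hj0def ▸ S.max'_mem hS
  obtain ⟨hj0J, γ0, hγ0Γ, hα0⟩ := Finset.mem_filter.mp hj0S
  have hj02 : 2 ≤ j0 := (Finset.mem_Icc.mp hj0J).1
  have hmax : ∀ j ∈ Finset.Icc 2 J, ∀ δ ∈ Γ', α j δ ≠ 0 → j ≤ j0 := fun j hj δ hδ hn =>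
    hj0def ▸ S.le_max' j (Finset.mem_filter.mpr ⟨hj, ⟨δ, hδ, hn⟩⟩)
  obtain ⟨-, hγ0e, hγ01⟩ := Finset.mem_filter.mp hγ0Γ
  -- facts about the distinguished root of unity
  have hγ00 : γ0 ≠ 0 := by
    intro h; rw [h, zero_pow (by omega : e ≠ 0)] at hγ0e; exact zero_ne_one hγ0e
  set c : AlgebraicClosure F := φ γ0 with hcdef
  have hc0 : c ≠ 0 := by
    rw [hcdef]
    intro h
    exact hγ00 (hφ (by rw [map_zero]; exact h))
  have hc1 : c ≠ 1 := by
    rw [hcdef]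
    intro h
    exact hγ01 (hφ (by rw [map_one]; exact h))
  -- characteristic fact : (d : A) ≠ 1
  have hdA1 : ((d : ℕ) : AlgebraicClosure F) ≠ 1 := by
    intro h0
    have hsub : (((d - 1 : ℕ) : ℕ) : AlgebraicClosure F) = 0 := by
      rw [Nat.cast_sub (by omega : 1 ≤ d), h0]; ring
    have hCharF : CharP F (ringChar F) := ringChar.charP F
    have hCharA : CharP (AlgebraicClosure F) (ringChar F) :=
      charP_of_injective_algebraMap hφ (ringChar F)
    rw [CharP.cast_eq_zero_iff (AlgebraicClosure F) (ringChar F)] at hsub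
    obtain ⟨n, hp, hcard⟩ := FiniteField.card F (ringChar F)
    have hpq : ringChar F ∣ Fintype.card F := by
      rw [hcard]; exact dvd_pow_self _ n.ne_zero
    have h1 : ringChar F ∣ 1 := hdq ▸ Nat.dvd_gcd hsub hpq
    exact Nat.Prime.one_lt hp |>.ne' (Nat.dvd_one.mp h1) |>.elim
  have heds : e ≤ d := he ▸ Nat.gcd_le_left _ (by omega : 0 < d)
  obtain ⟨m, hm⟩ : ∃ m, j0 = m + 1 := ⟨j0 - 1, by omega⟩
  -- the main polynomial g and the auxiliary K
  set g : Polynomial (AlgebraicClosure F) := Gpoly (AlgebraicClosure F) d c j0 with hgdef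
  have hg0 : g ≠ 0 := Gpoly_ne_zero hd2 hc1 j0
  have hgdeg : g.natDegree = d ^ j0 := Gpoly_natDegree hd2 hc0 (by omega)
  have hgroots : (Multiset.card g.roots) = d ^ j0 := by
    rw [splits_iff_card_roots.mp (IsAlgClosed.splits g), hgdeg]
  set K : Polynomial (AlgebraicClosure F) := Kpoly (AlgebraicClosure F) d m with hKdef
  have hK0 : K ≠ 0 := Kpoly_ne_zero hd2 hdA1 m
  have hKdeg : K.natDegree ≤ d ^ m := Kpoly_natDegree_le hd2 m
  set R : Finset (AlgebraicClosure F) := g.roots.toFinset with hRdef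
  set Bad : Finset (AlgebraicClosure F) :=
    ((Finset.Icc 2 (j0 - 1)) ×ˢ Γ').biUnion
      (fun pr => (Vpoly (AlgebraicClosure F) d c (φ pr.2) (j0 - pr.1)).roots.toFinset)
    with hBaddef
  set T : Finset (AlgebraicClosure F) := K.roots.toFinset ∪ {0} ∪ Bad with hTdef
  -- counting : excess multiplicity is bounded by deg K
  have hcount1 : ∀ x ∈ R, g.roots.count x - 1 ≤ K.roots.count x := by
    intro x _
    rw [count_roots, count_roots]
    refine (le_rootMultiplicity_iff hK0).mpr ?_
    have h1 := mult_root_dvd_Kpoly hd2 hc1 m x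
    rw [← hm] at h1
    exact h1
  have hExcess : ∑ x ∈ R, (g.roots.count x - 1) ≤ d ^ m := by
    have h2 : ∑ x ∈ R, K.roots.count x ≤ Multiset.card K.roots := by
      have h3 : ∑ x ∈ R, K.roots.count x = ∑ x ∈ R ∩ K.roots.toFinset, K.roots.count x := by
        refine (Finset.sum_subset Finset.inter_subset_left ?_).symm
        intro x hx hnx
        exact Multiset.count_eq_zero.mpr
          (fun hmem => hnx (Finset.mem_inter.mpr ⟨hx, Multiset.mem_toFinset.mpr hmem⟩))
      rw [h3, ← Multiset.toFinset_sum_count_eq K.roots]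
      exact Finset.sum_le_sum_of_subset Finset.inter_subset_right
    calc ∑ x ∈ R, (g.roots.count x - 1) ≤ ∑ x ∈ R, K.roots.count x :=
          Finset.sum_le_sum hcount1
      _ ≤ Multiset.card K.roots := h2
      _ ≤ K.natDegree := K.card_roots'
      _ ≤ d ^ m := hKdeg
  have hRcard : R.card + ∑ x ∈ R, (g.roots.count x - 1) = d ^ j0 := by
    have h1 : ∀ x ∈ R, 1 ≤ g.roots.count x := fun x hx =>
      Multiset.one_le_count_iff_mem.mpr (Multiset.mem_toFinset.mp hx)
    have h2 : ∑ x ∈ R, g.roots.count x = d ^ j0 := by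
      rw [Multiset.toFinset_sum_count_eq]; exact hgroots
    calc R.card + ∑ x ∈ R, (g.roots.count x - 1)
        = ∑ x ∈ R, (1 + (g.roots.count x - 1)) := by
          rw [Finset.sum_add_distrib, Finset.sum_const, smul_eq_mul, mul_one]
      _ = ∑ x ∈ R, g.roots.count x := Finset.sum_congr rfl (fun x hx => by
          have := h1 x hx; omega)
      _ = d ^ j0 := h2
  -- bounding the bad set
  have hΓcard : Γ'.card + 1 ≤ e := by
    have h1 : insert (1 : F) Γ' ⊆ (nthRoots e (1 : F)).toFinset := by
      intro γ hγ
      rcases Finset.mem_insert.mp hγ with h | h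
      · subst h
        exact Multiset.mem_toFinset.mpr ((mem_nthRoots (by omega : 0 < e)).mpr (one_pow e))
      · obtain ⟨-, hγe, -⟩ := Finset.mem_filter.mp h
        exact Multiset.mem_toFinset.mpr ((mem_nthRoots (by omega : 0 < e)).mpr hγe)
    have h2 : (insert (1 : F) Γ').card = Γ'.card + 1 := by
      rw [Finset.card_insert_of_notMem (fun h => by
        obtain ⟨-, -, h1⟩ := Finset.mem_filter.mp h; exact h1 rfl)]
    calc Γ'.card + 1 = (insert (1 : F) Γ').card := h2.symm
      _ ≤ (nthRoots e (1 : F)).toFinset.card := Finset.card_le_card h1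
      _ ≤ Multiset.card (nthRoots e (1 : F)) := Multiset.toFinset_card_le _
      _ ≤ e := card_nthRoots e 1
  have hBadBound : Bad.card + d ≤ d ^ m := by
    have h1 : Bad.card ≤ ∑ pr ∈ (Finset.Icc 2 (j0 - 1)) ×ˢ Γ',
        (Vpoly (AlgebraicClosure F) d c (φ pr.2) (j0 - pr.1)).roots.toFinset.card :=
      Finset.card_biUnion_le
    have h2 : ∀ pr ∈ (Finset.Icc 2 (j0 - 1)) ×ˢ Γ',
        (Vpoly (AlgebraicClosure F) d c (φ pr.2) (j0 - pr.1)).roots.toFinset.card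
          ≤ d ^ (j0 - pr.1) := by
      intro pr hpr
      obtain ⟨hj, hδ⟩ := Finset.mem_product.mp hpr
      obtain ⟨hj2, hjle⟩ := Finset.mem_Icc.mp hj
      obtain ⟨-, hδe, -⟩ := Finset.mem_filter.mp hδ
      have hδ0 : φ pr.2 ≠ 0 := fun h => by
        have : pr.2 = 0 := hφ (by rw [h, map_zero])
        rw [this, zero_pow (by omega : e ≠ 0)] at hδe
        exact zero_ne_one hδe
      have hi1 : 1 ≤ j0 - pr.1 := by omega
      calc (Vpoly (AlgebraicClosure F) d c (φ pr.2) (j0 - pr.1)).roots.toFinset.card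
          ≤ Multiset.card (Vpoly (AlgebraicClosure F) d c (φ pr.2) (j0 - pr.1)).roots :=
            Multiset.toFinset_card_le _
        _ ≤ (Vpoly (AlgebraicClosure F) d c (φ pr.2) (j0 - pr.1)).natDegree := card_roots' _
        _ = d ^ (j0 - pr.1) := Vpoly_natDegree hd2 hc0 hδ0 hi1
    have h3 : ∑ pr ∈ (Finset.Icc 2 (j0 - 1)) ×ˢ Γ',
        (Vpoly (AlgebraicClosure F) d c (φ pr.2) (j0 - pr.1)).roots.toFinset.card
        ≤ ∑ pr ∈ (Finset.Icc 2 (j0 - 1)) ×ˢ Γ', d ^ (j0 - pr.1) := Finset.sum_le_sum h2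
    have h4 : ∑ pr ∈ (Finset.Icc 2 (j0 - 1)) ×ˢ Γ', d ^ (j0 - pr.1)
        = ∑ j ∈ Finset.Icc 2 (j0 - 1), Γ'.card * d ^ (j0 - j) := by
      rw [Finset.sum_product]
      exact Finset.sum_congr rfl fun j _ => by
        simp [Finset.sum_const, smul_eq_mul]
    have h5 : ∑ j ∈ Finset.Icc 2 (j0 - 1), Γ'.card * d ^ (j0 - j)
        ≤ (e - 1) * ∑ j ∈ Finset.Icc 2 (j0 - 1), d ^ (j0 - j) := by
      rw [Finset.mul_sum]
      exact Finset.sum_le_sum fun j _ => Nat.mul_le_mul_right _ (by omega)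
    have h7 : (e - 1) * (∑ j ∈ Finset.Icc 2 (j0 - 1), d ^ (j0 - j)) + d ≤ d ^ (j0 - 1) :=
      geom_bound2 (by omega) (by omega : (e - 1) + 1 ≤ d) j0 hj02
    have h8 : d ^ (j0 - 1) = d ^ m := by rw [show j0 - 1 = m from by omega]
    rw [h8] at h7
    calc Bad.card + d ≤ (∑ pr ∈ (Finset.Icc 2 (j0 - 1)) ×ˢ Γ',
          (Vpoly (AlgebraicClosure F) d c (φ pr.2) (j0 - pr.1)).roots.toFinset.card) + d := by
          omega
      _ ≤ (∑ j ∈ Finset.Icc 2 (j0 - 1), Γ'.card * d ^ (j0 - j)) + d := by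
          rw [← h4]; omega
      _ ≤ ((e - 1) * ∑ j ∈ Finset.Icc 2 (j0 - 1), d ^ (j0 - j)) + d := by omega
      _ ≤ d ^ m := h7
  -- the good point exists
  have hMj0 : d ^ m * 3 ≤ d ^ j0 := by
    rw [hm, pow_succ]
    exact Nat.mul_le_mul_left _ (by omega)
  have hM1 : 1 ≤ d ^ m := Nat.one_le_pow _ _ (by omega)
  have hT : T.card < R.card := by
    have h1 : T.card ≤ K.roots.toFinset.card + 1 + Bad.card := by
      calc T.card ≤ (K.roots.toFinset ∪ {0}).card + Bad.card := Finset.card_union_le _ _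
        _ ≤ (K.roots.toFinset.card + ({0} : Finset (AlgebraicClosure F)).card) + Bad.card := by
            have := Finset.card_union_le K.roots.toFinset ({0} : Finset (AlgebraicClosure F))
            omega
        _ = K.roots.toFinset.card + 1 + Bad.card := by rw [Finset.card_singleton]
    have h2 : K.roots.toFinset.card ≤ d ^ m := by
      calc K.roots.toFinset.card ≤ Multiset.card K.roots := Multiset.toFinset_card_le _
        _ ≤ K.natDegree := K.card_roots'
        _ ≤ d ^ m := hKdeg
    omega
  have hgood : (R \ T).Nonempty := by
    refine Finset.card_pos.mp ?_
    have := Finset.le_card_sdiff T R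
    omega
  obtain ⟨x, hxRT⟩ := hgood
  obtain ⟨hxR, hxT⟩ := Finset.mem_sdiff.mp hxRT
  have hxK : x ∉ K.roots.toFinset := fun h => hxT (Finset.mem_union_left _ (Finset.mem_union_left _ h))
  have hx0 : x ≠ 0 := fun h =>
    hxT (Finset.mem_union_left _ (Finset.mem_union_right _ (Finset.mem_singleton.mpr h)))
  have hxBad : x ∉ Bad := fun h => hxT (Finset.mem_union_right _ h)
  have hxg : g.IsRoot x := (mem_roots'.mp (Multiset.mem_toFinset.mp hxR)).2
  have hμ1 : g.roots.count x = 1 := by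
    have hge : 1 ≤ g.roots.count x :=
      Multiset.one_le_count_iff_mem.mpr (Multiset.mem_toFinset.mp hxR)
    have hle : g.roots.count x - 1 ≤ K.roots.count x := hcount1 x hxR
    have hK0' : K.roots.count x = 0 :=
      Multiset.count_eq_zero.mpr (fun h => hxK (Multiset.mem_toFinset.mpr h))
    omega
  -- rewrite the product over the closure
  have hQmap : (∏ j ∈ Finset.Icc 2 J, ∏ γ ∈ Γ', (Gpoly F d γ j) ^ (α j γ)).map φ
      = ∏ j ∈ Finset.Icc 2 J, ∏ γ ∈ Γ',
          (Gpoly (AlgebraicClosure F) d (φ γ) j) ^ (α j γ) := by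
    rw [Polynomial.map_prod]
    refine Finset.prod_congr rfl fun j _ => ?_
    rw [Polynomial.map_prod]
    refine Finset.prod_congr rfl fun γ _ => ?_
    rw [Polynomial.map_pow, map_Gpoly]
  set Q : Polynomial (AlgebraicClosure F) := ∏ j ∈ Finset.Icc 2 J, ∏ γ ∈ Γ',
      (Gpoly (AlgebraicClosure F) d (φ γ) j) ^ (α j γ) with hQdef
  have hQP : Q = P ^ e := by rw [← hQmap]; exact hEq
  have hGne : ∀ γ ∈ Γ', ∀ j : ℕ, Gpoly (AlgebraicClosure F) d (φ γ) j ≠ 0 := by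
    intro γ hγ j
    obtain ⟨-, -, hγ1⟩ := Finset.mem_filter.mp hγ
    exact Gpoly_ne_zero hd2 (fun h => hγ1 (hφ (by rw [h, map_one]))) j
  -- count the multiplicity of x in Q
  have hcQ : Q.roots.count x = ∑ j ∈ Finset.Icc 2 J, ∑ γ ∈ Γ',
      α j γ * (Gpoly (AlgebraicClosure F) d (φ γ) j).roots.count x := by
    rw [hQdef, count_roots_prod _ _ (fun j _ => Finset.prod_ne_zero_iff.mpr
      (fun γ hγ => pow_ne_zero _ (hGne γ hγ j)))]
    refine Finset.sum_congr rfl fun j _ => ?_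
    rw [count_roots_prod _ _ (fun γ hγ => pow_ne_zero _ (hGne γ hγ j))]
    refine Finset.sum_congr rfl fun γ _ => ?_
    rw [roots_pow, Multiset.count_nsmul]
  have hFvx : c * (Fiter (AlgebraicClosure F) d j0).eval x = x := by
    have := hxg
    rw [IsRoot, hgdef, Gpoly_eval] at this
    exact sub_eq_zero.mp this
  have hFvne : (Fiter (AlgebraicClosure F) d j0).eval x ≠ 0 := fun h => hx0 (by
    rw [← hFvx, h, mul_zero])
  have hsum : ∑ j ∈ Finset.Icc 2 J, ∑ γ ∈ Γ',
      α j γ * (Gpoly (AlgebraicClosure F) d (φ γ) j).roots.count x = α j0 γ0 := by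
    rw [Finset.sum_eq_single_of_mem j0 hj0J]
    · rw [Finset.sum_eq_single_of_mem γ0 hγ0Γ]
      · rw [← hcdef, ← hgdef, hμ1, mul_one]
      · intro δ hδ hδne
        obtain ⟨-, -, hδ1⟩ := Finset.mem_filter.mp hδ
        have hnr : ¬ (Gpoly (AlgebraicClosure F) d (φ δ) j0).IsRoot x := by
          intro hr
          rw [IsRoot, Gpoly_eval] at hr
          have h1 : φ δ * (Fiter (AlgebraicClosure F) d j0).eval x = x := sub_eq_zero.mp hr
          have h2 : φ δ = c := mul_right_cancel₀ hFvne (by rw [h1, hFvx])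
          exact hδne (hφ h2)
        rw [Multiset.count_eq_zero.mpr (fun hmem => hnr (mem_roots'.mp hmem).2), mul_zero]
    · intro j hj hjne
      by_cases hjlt : j < j0
      · refine Finset.sum_eq_zero fun δ hδ => ?_
        obtain ⟨-, hδe, hδ1⟩ := Finset.mem_filter.mp hδ
        have hδ0 : φ δ ≠ 0 := fun h => by
          have h1 : δ = 0 := hφ (by rw [h, map_zero])
          rw [h1, zero_pow (by omega : e ≠ 0)] at hδe
          exact zero_ne_one hδe
        have hnr : ¬ (Gpoly (AlgebraicClosure F) d (φ δ) j).IsRoot x := by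
          intro hr
          have hVr : (Vpoly (AlgebraicClosure F) d c (φ δ) (j0 - j)).eval x = 0 :=
            Vpoly_isRoot hd2 hδ0 (by omega : j ≤ j0) hr hxg
          have hV0 : Vpoly (AlgebraicClosure F) d c (φ δ) (j0 - j) ≠ 0 :=
            Vpoly_ne_zero hd2 hc0 hδ0 (by omega : 1 ≤ j0 - j)
          apply hxBad
          refine Finset.mem_biUnion.mpr ⟨(j, δ), ?_, ?_⟩
          · refine Finset.mem_product.mpr ⟨Finset.mem_Icc.mpr ?_, hδ⟩
            obtain ⟨h1, -⟩ := Finset.mem_Icc.mp hj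
            omega
          · exact Multiset.mem_toFinset.mpr (mem_roots'.mpr ⟨hV0, hVr⟩)
        rw [Multiset.count_eq_zero.mpr (fun hmem => hnr (mem_roots'.mp hmem).2), mul_zero]
      · refine Finset.sum_eq_zero fun δ hδ => ?_
        have hj0' : ¬ j ≤ j0 := by omega
        by_cases hz : α j δ = 0
        · rw [hz, zero_mul]
        · exact absurd (hmax j hj δ hδ hz) hj0'
  -- conclude
  have hcountP : Q.roots.count x = e * P.roots.count x := by
    rw [hQP, roots_pow, Multiset.count_nsmul]
  have hfin : α j0 γ0 = e * P.roots.count x := by rw [← hsum, ← hcQ, hcountP]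
  have hb := hα j0 γ0
  by_cases ht : P.roots.count x = 0
  · rw [ht, mul_zero] at hfin
    exact hα0 hfin
  · have : e ≤ e * P.roots.count x := Nat.le_mul_of_pos_right e (by omega)
    omega
end

section
/- Let q be a power of a prime p and let f ∈ F_q[X] be a polynomial of degree d ≥ 2. If there exists μ ∈ F_q with μ ≠ 0 such that f(X + μ) = f(X) + μ as polynomials, then p divides d. -/
open Polynomial in
theorem stmt13 (p : ℕ) (hp : p.Prime) (F : Type*) [Field F] [Fintype F] [CharP F p]
    (d : ℕ) (hd : 2 ≤ d) (f : Polynomial F) (hf : f.natDegree = d)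
    (mu : F) (hmu : mu ≠ 0)
    (h : f.comp (X + C mu) = f + C mu) :
    p ∣ d := by
  have hf0 : f ≠ 0 := by
    intro hz; rw [hz, natDegree_zero] at hf; omega
  have hHD : Polynomial.hasseDeriv (d - 1) f
      = C (f.coeff (d - 1)) + C ((d : F) * f.coeff d) * X := by
    ext n
    rw [Polynomial.hasseDeriv_coeff]
    match n with
    | 0 => simp [Nat.choose_self]
    | 1 =>
        have h1 : 1 + (d - 1) = d := by omega
        rw [h1]
        have h2 : d.choose (d - 1) = d := by
          rw [Nat.choose_symm (by omega)]
          exact Nat.choose_one_right d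
        simp [h2]
    | (m + 2) =>
        have hz : f.coeff (m + 2 + (d - 1)) = 0 := by
          apply coeff_eq_zero_of_natDegree_lt; omega
        simp [hz, coeff_X, coeff_C]
  have h1 : (Polynomial.taylor mu f).coeff (d - 1) = f.coeff (d - 1) := by
    rw [Polynomial.taylor_apply, h, coeff_add, coeff_C, if_neg (by omega), add_zero]
  rw [Polynomial.taylor_coeff, hHD] at h1
  simp only [eval_add, eval_mul, eval_C, eval_X] at h1
  have hmain : (d : F) * f.coeff d * mu = 0 := by linear_combination h1
  have hlc : f.coeff d ≠ 0 := by
    rw [← hf]; exact Polynomial.leadingCoeff_ne_zero.mpr hf0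
  have : (d : F) = 0 := by
    rcases mul_eq_zero.mp hmain with h' | h'
    · rcases mul_eq_zero.mp h' with h'' | h''
      · exact h''
      · exact absurd h'' hlc
    · exact absurd h' hmu
  exact (CharP.cast_eq_zero_iff F p d).mp this
end

section
/- Let q be a power of a prime p, let d ≥ 2 be an integer with p | d, and let μ ∈ F_q with μ ≠ 0. Then the number of polynomials f ∈ F_q[X] of degree exactly d satisfying f(X + μ) = f(X) + μ is at most (q−1)·q^{d/p}. -/
open Polynomial in
private lemma stmt14_key (p : ℕ) (hp : p.Prime) (F : Type*) [Field F] [CharP F p]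
    {μ : F} (hμ : μ ≠ 0) {h : Polynomial F} (hinv : h.comp (X + C μ) = h) :
    p ∣ h.natDegree := by
  set n := h.natDegree with hn
  rcases Nat.eq_zero_or_pos n with h0 | hpos
  · simp [h0]
  have hh0 : h ≠ 0 := fun hz => by simp [hz, natDegree_zero] at hn; omega
  have htay : taylor μ h = h := by rw [taylor_apply, hinv]
  have hc : (taylor μ h).coeff (n - 1) = h.coeff (n - 1) := by rw [htay]
  rw [taylor_coeff] at hc
  set P := hasseDeriv (n - 1) h with hP
  have hdeg : P.natDegree ≤ 1 := le_trans (natDegree_hasseDeriv_le _ _) (by omega)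
  have hc0 : P.coeff 0 = h.coeff (n - 1) := by
    rw [hP, hasseDeriv_coeff]; simp
  have hc1 : P.coeff 1 = (n : F) * h.coeff n := by
    rw [hP, hasseDeriv_coeff]
    have h1 : 1 + (n - 1) = n := by omega
    rw [h1]
    have h2 : n.choose (n - 1) = n := by
      rw [Nat.choose_symm (by omega : 1 ≤ n), Nat.choose_one_right]
    rw [h2]
  have hPform := eq_X_add_C_of_natDegree_le_one hdeg
  rw [hPform] at hc
  simp only [eval_add, eval_mul, eval_C, eval_X, hc0, hc1] at hc
  have hz : (n : F) * h.coeff n * μ = 0 := by linear_combination hc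
  have hcn : h.coeff n ≠ 0 := by
    rw [hn]; exact mt leadingCoeff_eq_zero.mp hh0
  have : (n : F) = 0 := by
    rcases mul_eq_zero.mp hz with h' | h'
    · rcases mul_eq_zero.mp h' with h'' | h''
      · exact h''
      · exact absurd h'' hcn
    · exact absurd h' hμ
  exact (CharP.cast_eq_zero_iff F p n).mp this

open Polynomial in
theorem stmt14 (p : ℕ) (hp : p.Prime) (F : Type*) [Field F] [Fintype F] [CharP F p]
    (d : ℕ) (hd : 2 ≤ d) (hpd : p ∣ d) (mu : F) (hmu : mu ≠ 0) :
    Nat.card {f : Polynomial F //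
        f.natDegree = d ∧ f.comp (X + C mu) = f + C mu} ≤
      (Fintype.card F - 1) * Fintype.card F ^ (d / p) := by
  classical
  have hp0 : 0 < p := hp.pos
  have hmd : p * (d / p) = d := Nat.mul_div_cancel' hpd
  set m := d / p with hmdef
  have hfne : ∀ f : {f : Polynomial F //
      f.natDegree = d ∧ f.comp (X + C mu) = f + C mu}, f.1.leadingCoeff ≠ 0 := by
    intro f
    refine mt leadingCoeff_eq_zero.mp (fun hz => ?_)
    have := f.2.1
    rw [hz, natDegree_zero] at this
    omega
  set Φ : {f : Polynomial F // f.natDegree = d ∧ f.comp (X + C mu) = f + C mu} →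
      Fˣ × (Fin m → F) :=
    fun f => (Units.mk0 f.1.leadingCoeff (hfne f), fun k => f.1.coeff (p * k)) with hΦdef
  have hΦ : Function.Injective Φ := by
    intro f g hfg
    have h1 : f.1.leadingCoeff = g.1.leadingCoeff := by
      have := congrArg Prod.fst hfg
      simpa [hΦdef] using congrArg Units.val this
    have h2 : ∀ k : Fin m, f.1.coeff (p * k) = g.1.coeff (p * k) := by
      intro k
      have := congrArg Prod.snd hfg
      exact congrFun this k
    apply Subtype.ext
    by_contra hne
    set h := f.1 - g.1 with hh
    have hh0 : h ≠ 0 := sub_ne_zero.mpr hne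
    have hinv : h.comp (X + C mu) = h := by
      rw [hh, sub_comp, f.2.2, g.2.2]; ring
    have hdvd : p ∣ h.natDegree := stmt14_key p hp F hmu hinv
    have hled : h.natDegree ≤ d := by
      refine le_trans (natDegree_sub_le _ _) ?_
      rw [f.2.1, g.2.1]; simp
    have hcd : h.coeff d = 0 := by
      have h1' : f.1.coeff d = g.1.coeff d := by
        have hf := f.2.1; have hg := g.2.1
        rw [Polynomial.leadingCoeff, Polynomial.leadingCoeff, hf, hg] at h1
        exact h1
      rw [hh, coeff_sub, h1', sub_self]
    have hlt : h.natDegree < d := by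
      rcases lt_or_eq_of_le hled with h' | h'
      · exact h'
      · exfalso
        have : h.coeff h.natDegree ≠ 0 := mt leadingCoeff_eq_zero.mp hh0
        rw [h'] at this
        exact this hcd
    obtain ⟨k, hk⟩ := hdvd
    have hkm : k < m := by
      by_contra hkm
      push_neg at hkm
      have : p * m ≤ p * k := Nat.mul_le_mul_left p hkm
      omega
    have hz : h.coeff (p * k) = 0 := by
      have := h2 ⟨k, hkm⟩
      simp only [hh, coeff_sub]
      rw [show ((⟨k, hkm⟩ : Fin m) : ℕ) = k from rfl] at this
      rw [this, sub_self]
    have : h.coeff h.natDegree ≠ 0 := mt leadingCoeff_eq_zero.mp hh0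
    rw [hk] at this
    exact this hz
  calc Nat.card {f : Polynomial F // f.natDegree = d ∧ f.comp (X + C mu) = f + C mu}
      ≤ Nat.card (Fˣ × (Fin m → F)) := Nat.card_le_card_of_injective Φ hΦ
    _ = (Fintype.card F - 1) * Fintype.card F ^ m := by
        rw [Nat.card_prod, Nat.card_eq_fintype_card, Nat.card_eq_fintype_card,
          Fintype.card_units, Fintype.card_fun, Fintype.card_fin]
end

section
/- Let q be a prime power, let d ≥ 3 be an integer, let λ ∈ F_q^* satisfy λ^{d−1} = 1 and λ ≠ 1, and let μ ∈ F_q. Then the number of polynomials f ∈ F_q[X] of degree exactly d satisfying f(λX + μ) = λ·f(X) + μ is at most (q−1)·q^{d−1−φ(d−1)}, where φ is Euler's totient function. -/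
open Polynomial Finset

lemma aux_coeff {R : Type*} [CommSemiring R] (p : R[X]) (a : R) (i : ℕ) :
    (p.comp (C a * X)).coeff i = a ^ i * p.coeff i := by
  induction p using Polynomial.induction_on' with
  | add p q hp hq => simp [add_comp, hp, hq, mul_add]
  | monomial n b =>
    rw [monomial_comp, mul_pow, ← C_pow, ← mul_assoc, ← C_mul, coeff_C_mul, coeff_X_pow,
      coeff_monomial]
    rcases eq_or_ne n i with rfl | h
    · simp [mul_comm]
    · simp [h, Ne.symm h]

lemma aux_totient {n k : ℕ} (hk : 2 ≤ k) (hkn : k ∣ n) (hn : 0 < n) :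
    Nat.totient n ≤ n - n / k := by
  have hk0 : k ≠ 0 := by omega
  have hsub : ((Finset.range (n/k)).image (fun j => j * k)) ⊆
      (Finset.range n).filter (fun i => k ∣ i) := by
    intro i hi
    simp only [Finset.mem_image, Finset.mem_range] at hi
    obtain ⟨j, hj, rfl⟩ := hi
    simp only [Finset.mem_filter, Finset.mem_range]
    refine ⟨?_, Dvd.intro_left j rfl⟩
    have h1 := (Nat.lt_div_iff_mul_lt' hkn j).mp hj
    have h2 : j * k = k * j := mul_comm _ _
    omega
  have hMcard : n / k ≤ ((Finset.range n).filter (fun i => k ∣ i)).card := by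
    calc n / k = ((Finset.range (n/k)).image (fun j => j * k)).card := by
          rw [Finset.card_image_of_injective _ (mul_left_injective₀ hk0), Finset.card_range]
      _ ≤ _ := Finset.card_le_card hsub
  have hsubset : (Finset.range n).filter (fun a => n.Coprime a) ⊆
      (Finset.range n) \ ((Finset.range n).filter (fun i => k ∣ i)) := by
    intro i hi
    simp only [Finset.mem_filter] at hi
    simp only [Finset.mem_sdiff, Finset.mem_filter]
    refine ⟨hi.1, fun h => ?_⟩
    have h1 : k ∣ Nat.gcd n i := Nat.dvd_gcd hkn h.2
    have h2 : Nat.gcd n i = 1 := hi.2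
    rw [h2] at h1
    have := Nat.le_of_dvd one_pos h1
    omega
  have hle := Finset.card_le_card hsubset
  rw [Finset.card_sdiff_of_subset (Finset.filter_subset _ _), Finset.card_range] at hle
  rw [Nat.totient_eq_card_coprime]
  omega

lemma aux_funeq {F : Type*} [Field F] (lam mu c : F) (hc : lam * c + mu = c)
    (f : Polynomial F) (hf : f.comp (C lam * X + C mu) = C lam * f + C mu) :
    (f.comp (X + C c) - C c).comp (C lam * X) = C lam * (f.comp (X + C c) - C c) := by
  have h1 := congrArg (fun p => p.comp (X + C c)) hf
  simp only [comp_assoc, add_comp, mul_comp, C_comp, X_comp] at h1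
  -- h1 : f.comp ((C lam * X + C mu).comp (X + C c)) = ...
  have h2 : C lam * (X + C c) + C mu = C lam * X + C c := by
    rw [mul_add, ← C_mul, add_assoc, ← C_add, hc]
  rw [h2] at h1
  rw [sub_comp, C_comp, comp_assoc, add_comp, X_comp, C_comp, h1]
  have h4 : (C mu : Polynomial F) - C c = - (C lam * C c) := by
    rw [← C_mul, ← C_sub, ← C_neg]
    congr 1
    linear_combination hc
  linear_combination h4

open Polynomial in
theorem stmt15 (F : Type*) [Field F] [Fintype F] (d : ℕ) (hd : 3 ≤ d)
    (lam : F) (hlam0 : lam ≠ 0) (hlam1 : lam ^ (d - 1) = 1) (hlamne : lam ≠ 1)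
    (mu : F) :
    Nat.card {f : Polynomial F //
        f.natDegree = d ∧ f.comp (C lam * X + C mu) = C lam * f + C mu} ≤
      (Fintype.card F - 1) * Fintype.card F ^ (d - 1 - Nat.totient (d - 1)) := by
  classical
  set q := Fintype.card F with hq
  have hq2 : 2 ≤ q := Fintype.one_lt_card
  have hsub1 : (1 : F) - lam ≠ 0 := sub_ne_zero.mpr (Ne.symm hlamne)
  set c : F := mu / (1 - lam) with hcdef
  have hc : lam * c + mu = c := by
    rw [hcdef]
    field_simp
    ring
  set S : Finset ℕ := (Finset.range d).filter (fun i => lam ^ i = lam) with hS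
  -- degree of the conjugated polynomial
  have hGdeg : ∀ f : Polynomial F, f.natDegree = d →
      (f.comp (X + C c) - C c).natDegree = d := by
    intro f hf
    rw [natDegree_sub_C, natDegree_comp, natDegree_X_add_C, mul_one, hf]
  -- coefficient vanishing
  have hvanish : ∀ f : Polynomial F,
      f.comp (C lam * X + C mu) = C lam * f + C mu →
      ∀ i : ℕ, lam ^ i ≠ lam → (f.comp (X + C c) - C c).coeff i = 0 := by
    intro f hf i hi
    have h := congrArg (fun p => p.coeff i) (aux_funeq lam mu c hc f hf)
    simp only [aux_coeff, coeff_C_mul] at h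
    have h2 : (lam ^ i - lam) * (f.comp (X + C c) - C c).coeff i = 0 := by
      linear_combination h
    rcases mul_eq_zero.mp h2 with h3 | h3
    · exact absurd (by linear_combination h3) hi
    · exact h3
  -- the injection
  set A := {f : Polynomial F //
      f.natDegree = d ∧ f.comp (C lam * X + C mu) = C lam * f + C mu} with hA
  have hcoeffd : ∀ f : A, (f.1.comp (X + C c) - C c).coeff d ≠ 0 := by
    intro f
    have hdeg := hGdeg f.1 f.2.1
    have h0 : f.1.comp (X + C c) - C c ≠ 0 := by
      intro h
      rw [h, natDegree_zero] at hdeg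
      omega
    have := Polynomial.leadingCoeff_ne_zero.mpr h0
    rwa [Polynomial.leadingCoeff, hdeg] at this
  let Φ : A → {a : F // a ≠ 0} × ({i // i ∈ S} → F) := fun f =>
    (⟨(f.1.comp (X + C c) - C c).coeff d, hcoeffd f⟩,
     fun i => (f.1.comp (X + C c) - C c).coeff i.1)
  have hinj : Function.Injective Φ := by
    intro f1 f2 h
    obtain ⟨hfst, hsnd⟩ := Prod.ext_iff.mp h
    have hfst' := Subtype.ext_iff.mp hfst
    have hGg : f1.1.comp (X + C c) - C c = f2.1.comp (X + C c) - C c := by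
      ext i
      rcases lt_trichotomy i d with hi | rfl | hi
      · by_cases hli : lam ^ i = lam
        · have hiS : i ∈ S := by
            rw [hS]; exact Finset.mem_filter.mpr ⟨Finset.mem_range.mpr hi, hli⟩
          exact congrFun hsnd ⟨i, hiS⟩
        · rw [hvanish f1.1 f1.2.2 i hli, hvanish f2.1 f2.2.2 i hli]
      · exact hfst'
      · rw [coeff_eq_zero_of_natDegree_lt (by rw [hGdeg f1.1 f1.2.1]; exact hi),
          coeff_eq_zero_of_natDegree_lt (by rw [hGdeg f2.1 f2.2.1]; exact hi)]
    have hrec : ∀ p : Polynomial F,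
        ((p.comp (X + C c) - C c) + C c).comp (X - C c) = p := by
      intro p
      rw [sub_add_cancel, comp_assoc, add_comp, X_comp, C_comp, sub_add_cancel, comp_X]
    have := congrArg (fun p => (p + C c).comp (X - C c)) hGg
    simp only [hrec] at this
    exact Subtype.ext this
  -- cardinality of S
  have hd1 : 0 < d - 1 := by omega
  set k := orderOf lam with hk
  have hdvd : k ∣ d - 1 := orderOf_dvd_of_pow_eq_one hlam1
  have hk0 : k ≠ 0 := by
    intro h
    rw [h] at hdvd
    omega
  have hk1 : k ≠ 1 := fun h => hlamne (orderOf_eq_one_iff.mp h)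
  have hk2 : 2 ≤ k := by omega
  have hsubS : S ⊆ (Finset.range ((d - 1) / k)).image (fun j => j * k + 1) := by
    intro i hi
    rw [hS, Finset.mem_filter, Finset.mem_range] at hi
    obtain ⟨hid, hil⟩ := hi
    have hi0 : i ≠ 0 := by
      intro h
      rw [h, pow_zero] at hil
      exact hlamne hil.symm
    have him : lam ^ (i - 1) = 1 := by
      have h' : lam ^ (i - 1) * lam = 1 * lam := by
        rw [one_mul, ← pow_succ]
        rw [show i - 1 + 1 = i by omega]
        exact hil
      exact mul_right_cancel₀ hlam0 h'
    obtain ⟨j, hj⟩ := orderOf_dvd_of_pow_eq_one him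
    rw [← hk] at hj
    rw [Finset.mem_image]
    refine ⟨j, Finset.mem_range.mpr ?_, ?_⟩
    · rw [Nat.lt_div_iff_mul_lt' hdvd]
      omega
    · have : j * k = k * j := mul_comm _ _
      omega
  have hScard : S.card ≤ d - 1 - Nat.totient (d - 1) := by
    have h1 : S.card ≤ (d - 1) / k := by
      calc S.card ≤ ((Finset.range ((d - 1) / k)).image (fun j => j * k + 1)).card :=
            Finset.card_le_card hsubS
        _ ≤ (d - 1) / k := (Finset.card_image_le).trans (by rw [Finset.card_range])
    have h2 := aux_totient hk2 hdvd hd1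
    have h3 : (d - 1) / k ≤ d - 1 := Nat.div_le_self _ _
    omega
  -- final computation
  calc Nat.card A ≤ Nat.card ({a : F // a ≠ 0} × ({i // i ∈ S} → F)) :=
        Nat.card_le_card_of_injective Φ hinj
    _ = (q - 1) * q ^ S.card := by
        rw [Nat.card_prod, Nat.card_eq_fintype_card, Nat.card_eq_fintype_card,
          Fintype.card_congr unitsEquivNeZero.symm, Fintype.card_units,
          Fintype.card_fun, Fintype.card_coe]
    _ ≤ (q - 1) * q ^ (d - 1 - Nat.totient (d - 1)) := by
        exact Nat.mul_le_mul_left _ (Nat.pow_le_pow_right (by omega) hScard)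
end

section
/- Let e = gcd(d, q−1) ≥ 2 and let j ≥ 1 be an integer. For any two distinct γ, δ ∈ Γ_e \ {1}, the polynomials G*_{j,γ} and G*_{j,δ} are coprime in F_q[X], i.e., gcd(G*_{j,γ}, G*_{j,δ}) = 1. -/
theorem stmt16 (F : Type*) [Field F] [Fintype F] (d : ℕ) (hd : 2 ≤ d)
    (e : ℕ) (he : e = Nat.gcd d (Fintype.card F - 1)) (he2 : 2 ≤ e)
    (j : ℕ) (hj : 1 ≤ j) (γ δ : F)
    (hγ : γ ^ e = 1) (hγ1 : γ ≠ 1) (hδ : δ ^ e = 1) (hδ1 : δ ≠ 1) (hne : γ ≠ δ) :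
    IsCoprime (Gpoly F d γ j / Polynomial.X) (Gpoly F d δ j / Polynomial.X) := by
  have hd0 : d ≠ 0 := by omega
  have hXF : ∀ k, Polynomial.X ∣ Fiter F d k := by
    intro k
    induction k with
    | zero => simp [Fiter]
    | succ k ih => exact dvd_add (dvd_pow ih hd0) dvd_rfl
  have hXG : ∀ c : F, Polynomial.X ∣ Gpoly F d c j :=
    fun c => dvd_sub ((hXF j).mul_left _) dvd_rfl
  have hX0 : (Polynomial.X : Polynomial F) ≠ 0 := Polynomial.X_ne_zero
  have hp : Polynomial.X * (Gpoly F d γ j / Polynomial.X) = Gpoly F d γ j := by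
    exact EuclideanDomain.mul_div_cancel' hX0 (hXG γ)
  have hq : Polynomial.X * (Gpoly F d δ j / Polynomial.X) = Gpoly F d δ j := by
    exact EuclideanDomain.mul_div_cancel' hX0 (hXG δ)
  have hsub : γ - δ ≠ 0 := sub_ne_zero.mpr hne
  refine ⟨Polynomial.C ((γ - δ)⁻¹ * δ), Polynomial.C (-((γ - δ)⁻¹ * γ)), ?_⟩
  apply mul_left_cancel₀ hX0
  have hc : Polynomial.C ((γ - δ)⁻¹) * (Polynomial.C γ - Polynomial.C δ)
      = (1 : Polynomial F) := by
    rw [← Polynomial.C_sub, ← Polynomial.C_mul, inv_mul_cancel₀ hsub, Polynomial.C_1]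
  calc Polynomial.X * (Polynomial.C ((γ - δ)⁻¹ * δ) * (Gpoly F d γ j / Polynomial.X)
        + Polynomial.C (-((γ - δ)⁻¹ * γ)) * (Gpoly F d δ j / Polynomial.X))
      = Polynomial.C ((γ - δ)⁻¹ * δ) * (Polynomial.X * (Gpoly F d γ j / Polynomial.X))
        + Polynomial.C (-((γ - δ)⁻¹ * γ))
          * (Polynomial.X * (Gpoly F d δ j / Polynomial.X)) := by ring
    _ = Polynomial.C ((γ - δ)⁻¹ * δ) * Gpoly F d γ j
        + Polynomial.C (-((γ - δ)⁻¹ * γ)) * Gpoly F d δ j := by rw [hp, hq]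
    _ = Polynomial.X * 1 := by
        simp only [Gpoly, map_mul, map_neg]
        linear_combination Polynomial.X * hc
end

section
/- Let e = gcd(d, q−1) ≥ 2. For any positive integers k and h and any δ ∈ Γ_e \ {1}, the degree of gcd(G*_{k+h,δ}, ∏_{γ ∈ Γ_e \ {1}} G_{k,γ}) in F_q[X] is at most d^h − 1. -/
namespace Stmt18Aux

open Polynomial

variable {F : Type*} [Field F]

lemma Fiter_succ (d k : ℕ) : Fiter F d (k + 1) = Fiter F d k ^ d + X := rfl

lemma Fiter_monic_natDegree (d : ℕ) (hd : 2 ≤ d) (k : ℕ) :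
    (Fiter F d k).Monic ∧ (Fiter F d k).natDegree = d ^ k := by
  induction k with
  | zero => simp [Fiter]
  | succ k ih =>
    obtain ⟨hm, hdeg⟩ := ih
    have hmp : (Fiter F d k ^ d).Monic := hm.pow _
    have hdp : (Fiter F d k ^ d).natDegree = d ^ (k + 1) := by
      rw [natDegree_pow, hdeg, pow_succ, mul_comm]
    have hlt : degree (X : Polynomial F) < degree (Fiter F d k ^ d) := by
      rw [degree_X, degree_eq_natDegree hmp.ne_zero, hdp]
      exact_mod_cast Nat.one_lt_pow (Nat.succ_ne_zero k) hd
    constructor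
    · rw [Fiter_succ]; exact hmp.add_of_left hlt
    · rw [Fiter_succ, natDegree_eq_of_degree_eq (degree_add_eq_left_of_degree_lt hlt), hdp]

lemma Fiter_eval_zero (d : ℕ) (hd : 2 ≤ d) (k : ℕ) : (Fiter F d k).eval 0 = 0 := by
  induction k with
  | zero => simp [Fiter]
  | succ k ih =>
    rw [Fiter_succ]
    simp [ih, zero_pow (by omega : d ≠ 0)]

lemma X_dvd_Fiter (d : ℕ) (hd : 2 ≤ d) (k : ℕ) : (X : Polynomial F) ∣ Fiter F d k := by
  rw [X_dvd_iff, coeff_zero_eq_eval_zero]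
  exact Fiter_eval_zero d hd k

lemma Fiter_coeff_one (d : ℕ) (hd : 2 ≤ d) (k : ℕ) : (Fiter F d k).coeff 1 = 1 := by
  induction k with
  | zero => simp [Fiter]
  | succ k ih =>
    obtain ⟨r, hr⟩ : (X : Polynomial F) ^ d ∣ Fiter F d k ^ d :=
      pow_dvd_pow_of_dvd (X_dvd_Fiter d hd k) d
    have h1 : (Fiter F d k ^ d).coeff 1 = 0 := by
      rw [hr, mul_comm, coeff_mul_X_pow', if_neg (by omega)]
    rw [Fiter_succ, coeff_add, h1, coeff_X_one, zero_add]

lemma X_dvd_Gpoly (d : ℕ) (hd : 2 ≤ d) (γ : F) (k : ℕ) : (X : Polynomial F) ∣ Gpoly F d γ k := by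
  rw [X_dvd_iff, Gpoly, coeff_sub, coeff_C_mul, coeff_X_zero, coeff_zero_eq_eval_zero,
    Fiter_eval_zero d hd k]
  ring

lemma Gpoly_coeff_one (d : ℕ) (hd : 2 ≤ d) (γ : F) (k : ℕ) :
    (Gpoly F d γ k).coeff 1 = γ - 1 := by
  rw [Gpoly, coeff_sub, coeff_C_mul, coeff_X_one, Fiter_coeff_one d hd k, mul_one]

/-- The divided polynomial `G/X` and its constant coefficient. -/
lemma Gpoly_div_X (d : ℕ) (hd : 2 ≤ d) (γ : F) (k : ℕ) :
    X * (Gpoly F d γ k / X) = Gpoly F d γ k ∧ (Gpoly F d γ k / X).coeff 0 = γ - 1 := by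
  have h1 : X * (Gpoly F d γ k / X) = Gpoly F d γ k :=
    EuclideanDomain.mul_div_cancel' X_ne_zero (X_dvd_Gpoly d hd γ k)
  refine ⟨h1, ?_⟩
  have := congrArg (fun p => coeff p 1) h1
  simpa [coeff_X_mul, Gpoly_coeff_one d hd γ k] using this

/-- `F_k^e - X^e` divides `F_{k+j} - F_j` for `j ≥ 1`, when `e ∣ d`. -/
lemma pow_sub_pow_dvd (d e : ℕ) (hed : e ∣ d) (k j : ℕ) (hj : 1 ≤ j) :
    (Fiter F d k ^ e - X ^ e) ∣ (Fiter F d (k + j) - Fiter F d j) := by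
  induction j, hj using Nat.le_induction with
  | base =>
    obtain ⟨m, hm⟩ := hed
    have h1 : Fiter F d (k + 1) - Fiter F d 1 = Fiter F d k ^ d - X ^ d := by
      rw [Fiter_succ, Fiter_succ]
      show _ = _
      simp [Fiter]
    rw [h1, hm, pow_mul, pow_mul]
    exact sub_dvd_pow_sub_pow _ _ m
  | succ j hj ih =>
    have h1 : Fiter F d (k + (j + 1)) - Fiter F d (j + 1)
        = Fiter F d (k + j) ^ d - Fiter F d j ^ d := by
      have : k + (j + 1) = (k + j) + 1 := by ring
      rw [this, Fiter_succ, Fiter_succ]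
      ring
    rw [h1]
    exact ih.trans (sub_dvd_pow_sub_pow _ _ d)

end Stmt18Aux

open Polynomial Stmt18Aux in
theorem stmt18 (F : Type*) [Field F] [Fintype F] [DecidableEq F]
    (d : ℕ) (hd : 2 ≤ d)
    (e : ℕ) (he : e = Nat.gcd d (Fintype.card F - 1)) (he2 : 2 ≤ e)
    (k h : ℕ) (hk : 1 ≤ k) (hh : 1 ≤ h)
    (δ : F) (hδ : δ ^ e = 1) (hδ1 : δ ≠ 1) :
    (EuclideanDomain.gcd (Gpoly F d δ (k + h) / Polynomial.X)
        (∏ γ ∈ Finset.univ.filter (fun γ : F => γ ^ e = 1 ∧ γ ≠ 1),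
          Gpoly F d γ k)).natDegree ≤ d ^ h - 1 := by
  have he0 : 0 < e := by omega
  have hed : e ∣ d := he ▸ Nat.gcd_dvd_left _ _
  have heq : e ∣ Fintype.card F - 1 := he ▸ Nat.gcd_dvd_right _ _
  set S : Finset F := Finset.univ.filter (fun γ : F => γ ^ e = 1 ∧ γ ≠ 1) with hSdef
  set A : Polynomial F := Gpoly F d δ (k + h) / Polynomial.X with hAdef
  set Prd : Polynomial F := ∏ γ ∈ S, Gpoly F d γ k with hPrddef
  set P : Polynomial F := EuclideanDomain.gcd A Prd with hPdef
  obtain ⟨hXA, hA0⟩ := Gpoly_div_X (F := F) d hd δ (k + h)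
  have hA0' : A.coeff 0 ≠ 0 := by rw [hA0]; exact sub_ne_zero.mpr hδ1
  have hPA : P ∣ A := EuclideanDomain.gcd_dvd_left _ _
  have hPPrd : P ∣ Prd := EuclideanDomain.gcd_dvd_right _ _
  -- X does not divide P
  have hXP : ¬ (X : Polynomial F) ∣ P := by
    intro hc
    exact hA0' (X_dvd_iff.mp (hc.trans hPA))
  have hcop : IsCoprime P (X : Polynomial F) :=
    ((prime_X (R := F)).coprime_iff_not_dvd.mpr hXP).symm
  -- the product divides F_k^e - X^e
  have hPrdM : Prd ∣ (Fiter F d k ^ e - X ^ e) := by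
    -- primitive e-th root of unity
    obtain ⟨g, hg⟩ := IsCyclic.exists_ofOrder_eq_natCard (α := Fˣ)
    have hcard : Nat.card Fˣ = Fintype.card F - 1 := by
      rw [Nat.card_eq_fintype_card, Fintype.card_units]
    have hgo : e ∣ orderOf g := by rw [hg, hcard]; exact heq
    have hq1 : 1 < Fintype.card F := Fintype.one_lt_card
    have hgo0 : orderOf g ≠ 0 := by rw [hg, hcard]; omega
    have hord : orderOf (g ^ (orderOf g / e)) = e := orderOf_pow_orderOf_div hgo0 hgo
    have hζu : IsPrimitiveRoot (g ^ (orderOf g / e)) e := by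
      have := IsPrimitiveRoot.orderOf (g ^ (orderOf g / e))
      rwa [hord] at this
    have hζ : IsPrimitiveRoot (((g ^ (orderOf g / e)) : Fˣ) : F) e :=
      IsPrimitiveRoot.coe_units_iff.mpr hζu
    have hζC : IsPrimitiveRoot ((C : F →+* Polynomial F) ((g ^ (orderOf g / e) : Fˣ) : F)) e :=
      hζ.map_of_injective (C_injective)
    have hident : Fiter F d k ^ e - X ^ e
        = ∏ p ∈ nthRootsFinset e (1 : Polynomial F), (Fiter F d k - p * X) :=
      hζC.pow_sub_pow_eq_prod_sub_mul (Fiter F d k) X he0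
    have hset : nthRootsFinset e (1 : Polynomial F) = (nthRootsFinset e (1 : F)).image C := by
      ext p
      simp only [mem_nthRootsFinset he0, Finset.mem_image]
      constructor
      · intro hp
        have hu : IsUnit p := IsUnit.of_pow_eq_one hp (by omega)
        obtain ⟨r, _, hrp⟩ := Polynomial.isUnit_iff.mp hu
        refine ⟨r, ?_, hrp⟩
        apply C_injective
        rw [map_pow, hrp, hp, map_one]
      · rintro ⟨r, hr, rfl⟩
        rw [← map_pow, hr, map_one]
    have hident2 : Fiter F d k ^ e - X ^ e
        = ∏ γ ∈ nthRootsFinset e (1 : F), (Fiter F d k - C γ * X) := by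
      rw [hident, hset, Finset.prod_image (fun a _ b _ hab => C_injective hab)]
    -- each γ in S is nonzero
    have hS0 : ∀ γ ∈ S, γ ≠ 0 := by
      intro γ hγ
      rw [hSdef, Finset.mem_filter] at hγ
      intro hc
      rw [hc, zero_pow (by omega : e ≠ 0)] at hγ
      exact zero_ne_one hγ.2.1
    have hstep1 : Prd = C (∏ γ ∈ S, γ) * ∏ γ ∈ S, (Fiter F d k - C γ⁻¹ * X) := by
      rw [hPrddef, map_prod, ← Finset.prod_mul_distrib]
      refine Finset.prod_congr rfl fun γ hγ => ?_
      rw [Gpoly, mul_sub, ← mul_assoc, ← map_mul, mul_inv_cancel₀ (hS0 γ hγ), map_one, one_mul]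
    have hmemS : ∀ γ : F, γ ∈ S ↔ (γ ^ e = 1 ∧ γ ≠ 1) := by
      intro γ; rw [hSdef, Finset.mem_filter]
      simp
    have hinvS : ∀ γ : F, γ ∈ S → γ⁻¹ ∈ S := by
      intro γ hγ
      obtain ⟨h1, h2⟩ := (hmemS γ).mp hγ
      refine (hmemS γ⁻¹).mpr ⟨by rw [inv_pow, h1, inv_one], fun hc => h2 (by
        rw [← inv_inv γ, hc, inv_one])⟩
    have hstep2 : (∏ γ ∈ S, (Fiter F d k - C γ⁻¹ * X)) = ∏ γ ∈ S, (Fiter F d k - C γ * X) := by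
      refine Finset.prod_bij' (fun γ _ => γ⁻¹) (fun γ _ => γ⁻¹) ?_ ?_ ?_ ?_ ?_
      · intro γ hγ; exact hinvS γ hγ
      · intro γ hγ; exact hinvS γ hγ
      · intro γ _; exact inv_inv γ
      · intro γ _; exact inv_inv γ
      · intro γ _; rfl
    have hsub : S ⊆ nthRootsFinset e (1 : F) := by
      intro γ hγ
      rw [hSdef, Finset.mem_filter] at hγ
      exact (mem_nthRootsFinset he0 _).mpr hγ.2.1
    have hdvd1 : (∏ γ ∈ S, (Fiter F d k - C γ * X)) ∣ Fiter F d k ^ e - X ^ e := by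
      rw [hident2]
      exact Finset.prod_dvd_prod_of_subset S _ _ hsub
    have hu : IsUnit (C (∏ γ ∈ S, γ)) := by
      rw [Polynomial.isUnit_C]
      exact (Finset.prod_ne_zero_iff.mpr hS0).isUnit
    rw [hstep1, hstep2, hu.mul_left_dvd]
    exact hdvd1
  -- hence P divides G_{h,δ}
  have hPM : P ∣ Fiter F d k ^ e - X ^ e := hPPrd.trans hPrdM
  have hMd : (Fiter F d k ^ e - X ^ e) ∣ (Fiter F d (k + h) - Fiter F d h) :=
    pow_sub_pow_dvd d e hed k h hh
  have hPdiff : P ∣ (Gpoly F d δ (k + h) - Gpoly F d δ h) := by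
    have : Gpoly F d δ (k + h) - Gpoly F d δ h = C δ * (Fiter F d (k + h) - Fiter F d h) := by
      rw [Gpoly, Gpoly]; ring
    rw [this]
    exact Dvd.dvd.mul_left (hPM.trans hMd) _
  have hPG : P ∣ Gpoly F d δ (k + h) := hPA.trans (Dvd.intro_left _ hXA)
  have hPGh : P ∣ Gpoly F d δ h := by
    have := dvd_sub hPG hPdiff
    simpa using this
  -- Q = G_{h,δ}/X
  obtain ⟨hXQ, hQ0⟩ := Gpoly_div_X (F := F) d hd δ h
  set Q : Polynomial F := Gpoly F d δ h / Polynomial.X with hQdef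
  have hQ0' : Q ≠ 0 := by
    intro hc
    rw [hc] at hQ0
    simp only [coeff_zero] at hQ0
    exact hδ1 (sub_eq_zero.mp hQ0.symm)
  have hPQ : P ∣ Q := by
    refine hcop.dvd_of_dvd_mul_right ?_
    rw [mul_comm, hXQ]
    exact hPGh
  -- degree of Q
  have hGdeg : (Gpoly F d δ h).natDegree = d ^ h := by
    have hδ0 : δ ≠ 0 := by
      intro hc
      rw [hc, zero_pow (by omega : e ≠ 0)] at hδ
      exact zero_ne_one hδ
    have h1 : (C δ * Fiter F d h).natDegree = d ^ h := by
      rw [natDegree_C_mul hδ0, (Fiter_monic_natDegree d hd h).2]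
    have h2 : (X : Polynomial F).natDegree < (C δ * Fiter F d h).natDegree := by
      rw [natDegree_X, h1]
      exact Nat.one_lt_pow (by omega) hd
    rw [Gpoly, natDegree_sub_eq_left_of_natDegree_lt h2, h1]
  have hQdeg : Q.natDegree = d ^ h - 1 := by
    have := hGdeg
    rw [← hXQ, natDegree_mul X_ne_zero hQ0', natDegree_X] at this
    omega
  calc P.natDegree ≤ Q.natDegree := natDegree_le_of_dvd hPQ hQ0'
    _ = d ^ h - 1 := hQdeg
end
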